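/- arXiv:math/9804004 — 4 statements merged into one kernel-verified Lean document; each statement's English description precedes it below -/
import Mathlib

section
/- Let ℐ be a nonempty subset-closed family of admissible subsets of E_{±n} with the property that whenever I, J ∈ ℐ satisfy |I| < |J| and for all y ∈ J∖I the set {y} ∪ I is not in ℐ, then I ∪ J is inadmissible and there exists x ∉ I such that both {x} ∪ I and {−x} ∪ (I ∖ (−J)) are in ℐ. Let ℬ be the collection of maximal members of ℐ with respect to inclusion. Then (E_{±n}, ℬ) is a symplectic matroid, i.e., ℬ is a nonempty family of equinumerous admissible subsets of E_{±n} and for every admissible total ordering ≺ of E_{±n} and every weight function ω compatible with ≺, the greedy solution of ℬ is optimal. -/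
/-- The ground set `E_{±n} = {±1, ±2, …, ±n}` as a finite set of integers. -/
noncomputable def SympE (n : ℕ) : Finset ℤ := (Finset.Icc (-(n : ℤ)) (n : ℤ)).erase 0

/-- `negSet S = {-s : s ∈ S}`. -/
def negSet (S : Finset ℤ) : Finset ℤ := S.image (fun x => -x)

/-- A set `S` is admissible if `S ∩ (-S) = ∅`. -/
def IsAdmissibleSet (S : Finset ℤ) : Prop := ∀ s ∈ S, -s ∉ S

/-- An admissible permutation of `E_{±n}`: a permutation of `ℤ` mapping `E_{±n}` to
itself and commuting with negation.  It induces the admissible total ordering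
`x ≺ y ↔ w x < w y` on `E_{±n}`. -/
def IsAdmissiblePerm (n : ℕ) (w : Equiv.Perm ℤ) : Prop :=
  (∀ x ∈ SympE n, w x ∈ SympE n) ∧ ∀ x : ℤ, w (-x) = -(w x)

/-- A weight function `ω` compatible with the admissible ordering induced by `w`:
`i ≺ j` implies `ω i ≤ ω j`. -/
def IsCompatibleWeight (n : ℕ) (w : Equiv.Perm ℤ) (ω : ℤ → ℝ) : Prop :=
  ∀ i ∈ SympE n, ∀ j ∈ SympE n, w i < w j → ω i ≤ ω j

/-- The elements of `E_{±n}` listed from largest to smallest with respect to the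
admissible ordering induced by `w`. -/
noncomputable def orderList (n : ℕ) (w : Equiv.Perm ℤ) : List ℤ :=
  (((SympE n).sort (· ≤ ·)).reverse).map w.symm

/-- The greedy algorithm: processing the elements of the list in order, starting
with the current set `B`, pick up an element iff adding it keeps the current set
a subset of some member of `ℬ`.  Returns the list of picked-up elements in order. -/
def greedyAux (ℬ : Finset (Finset ℤ)) : List ℤ → Finset ℤ → List ℤ
  | [], _ => []
  | a :: l, B =>
      if ∃ B' ∈ ℬ, insert a B ⊆ B' then a :: greedyAux ℬ l (insert a B)
      else greedyAux ℬ l B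

/-- The list of elements picked up by the greedy algorithm on `ℬ`, in decreasing
order with respect to the admissible ordering induced by `w`. -/
noncomputable def greedyPicks (n : ℕ) (ℬ : Finset (Finset ℤ)) (w : Equiv.Perm ℤ) : List ℤ :=
  greedyAux ℬ (orderList n w) ∅

/-- The greedy solution of `ℬ` with respect to the admissible ordering induced
by `w`. -/
noncomputable def greedySol (n : ℕ) (ℬ : Finset (Finset ℤ)) (w : Equiv.Perm ℤ) : Finset ℤ :=
  (greedyPicks n ℬ w).toFinset

/-- `(E_{±n}, ℬ)` is a symplectic matroid: `ℬ` is a nonempty family of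
equinumerous admissible subsets of `E_{±n}` such that for every admissible
ordering and every compatible weight function the greedy solution is optimal. -/
def IsSymplecticMatroid (n : ℕ) (ℬ : Finset (Finset ℤ)) : Prop :=
  ℬ.Nonempty ∧
  (∀ B ∈ ℬ, B ⊆ SympE n ∧ IsAdmissibleSet B) ∧
  (∀ B ∈ ℬ, ∀ B' ∈ ℬ, B.card = B'.card) ∧
  (∀ w : Equiv.Perm ℤ, IsAdmissiblePerm n w →
    ∀ ω : ℤ → ℝ, IsCompatibleWeight n w ω →
      ∀ B' ∈ ℬ, ∑ b ∈ B', ω b ≤ ∑ b ∈ greedySol n ℬ w, ω b)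

/-- The family of independent sets of `(E_{±n}, ℬ)`:
all subsets of `E_{±n}` contained in some member of `ℬ`. -/
noncomputable def indepSets (n : ℕ) (ℬ : Finset (Finset ℤ)) : Finset (Finset ℤ) :=
  (SympE n).powerset.filter (fun I => ∃ B ∈ ℬ, I ⊆ B)

/-- The collection of maximal (with respect to inclusion) members of `ℐ`. -/
def maximalMembers (ℐ : Finset (Finset ℤ)) : Finset (Finset ℤ) :=
  ℐ.filter (fun B => ∀ I ∈ ℐ, B ⊆ I → I = B)

/-- The independent-set exchange property for symplectic matroids. -/
def ExchangeProp (ℐ : Finset (Finset ℤ)) : Prop :=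
  ∀ I ∈ ℐ, ∀ J ∈ ℐ, I.card < J.card →
    (∀ y ∈ J \ I, insert y I ∉ ℐ) →
      ¬ IsAdmissibleSet (I ∪ J) ∧
        ∃ x, x ∉ I ∧ insert x I ∈ ℐ ∧ insert (-x) (I \ negSet J) ∈ ℐ

lemma sympE_neg_mem {n : ℕ} {x : ℤ} (hx : x ∈ SympE n) : -x ∈ SympE n := by
  simp only [SympE, Finset.mem_erase, Finset.mem_Icc] at *
  omega

lemma exists_maximal_mem {ℐ : Finset (Finset ℤ)} {S : Finset ℤ} (hS : S ∈ ℐ) :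
    ∃ B ∈ maximalMembers ℐ, S ⊆ B := by
  classical
  obtain ⟨B, hB, hmax⟩ :=
    (ℐ.filter (fun I => S ⊆ I)).exists_max_image Finset.card ⟨S, by simp [hS]⟩
  simp only [Finset.mem_filter] at hB
  refine ⟨B, ?_, hB.2⟩
  simp only [maximalMembers, Finset.mem_filter]
  refine ⟨hB.1, fun I hI hBI => ?_⟩
  exact (Finset.eq_of_subset_of_card_le hBI
    (hmax I (Finset.mem_filter.mpr ⟨hI, hB.2.trans hBI⟩))).symm

lemma greedyAux_subset_basis (ℬ : Finset (Finset ℤ)) :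
    ∀ (l : List ℤ) (B : Finset ℤ), (∃ D ∈ ℬ, B ⊆ D) →
      ∃ D ∈ ℬ, B ∪ (greedyAux ℬ l B).toFinset ⊆ D
  | [], B, h => by
    obtain ⟨D, hD, hsub⟩ := h
    exact ⟨D, hD, by simpa [greedyAux] using hsub⟩
  | a :: l, B, h => by
    simp only [greedyAux]
    split_ifs with hcond
    · obtain ⟨D, hD, hsub⟩ := greedyAux_subset_basis ℬ l (insert a B) hcond
      refine ⟨D, hD, ?_⟩
      intro t ht
      simp only [List.toFinset_cons, Finset.mem_union, Finset.mem_insert] at ht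
      rcases ht with h1 | h1 | h1
      · exact hsub (Finset.mem_union_left _ (Finset.mem_insert_of_mem h1))
      · exact h1 ▸ hsub (Finset.mem_union_left _ (Finset.mem_insert_self _ _))
      · exact hsub (Finset.mem_union_right _ h1)
    · exact greedyAux_subset_basis ℬ l B h

lemma greedyAux_reject (ℬ : Finset (Finset ℤ)) (w : Equiv.Perm ℤ) :
    ∀ (l : List ℤ) (B : Finset ℤ), l.Pairwise (fun p q => w q < w p) →
      ∀ y ∈ l, y ∉ (greedyAux ℬ l B).toFinset →
        ∃ C : Finset ℤ, C ⊆ B ∪ (greedyAux ℬ l B).toFinset ∧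
          (∀ c ∈ C, c ∈ B ∨ w y < w c) ∧ ¬ ∃ D ∈ ℬ, insert y C ⊆ D
  | [], _, _, y, hy, _ => absurd hy (List.not_mem_nil (a := y))
  | a :: l, B, hpw, y, hy, hyn => by
    simp only [greedyAux] at hyn ⊢
    split_ifs at hyn ⊢ with hcond
    · simp only [List.toFinset_cons, Finset.mem_insert, not_or] at hyn
      obtain ⟨hya, hyn'⟩ := hyn
      have hyl : y ∈ l := by
        rcases List.mem_cons.mp hy with h | h
        · exact absurd h hya
        · exact h
      obtain ⟨C, hC1, hC2, hC3⟩ :=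
        greedyAux_reject ℬ w l (insert a B) hpw.of_cons y hyl hyn'
      refine ⟨C, ?_, ?_, hC3⟩
      · intro t ht
        have := hC1 ht
        simp only [List.toFinset_cons, Finset.mem_union, Finset.mem_insert] at this ⊢
        tauto
      · intro t ht
        rcases hC2 t ht with h | h
        · rcases Finset.mem_insert.mp h with rfl | h'
          · exact Or.inr (List.rel_of_pairwise_cons hpw hyl)
          · exact Or.inl h'
        · exact Or.inr h
    · rcases List.mem_cons.mp hy with rfl | hyl
      · exact ⟨B, Finset.subset_union_left, fun c hc => Or.inl hc, hcond⟩
      · exact greedyAux_reject ℬ w l B hpw.of_cons y hyl hyn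

lemma mem_orderList {n : ℕ} {w : Equiv.Perm ℤ} (hw : IsAdmissiblePerm n w) {y : ℤ}
    (hy : y ∈ SympE n) : y ∈ orderList n w := by
  simp only [orderList, List.mem_map, List.mem_reverse, Finset.mem_sort]
  exact ⟨w y, hw.1 y hy, w.symm_apply_apply y⟩

lemma orderList_pairwise (n : ℕ) (w : Equiv.Perm ℤ) :
    (orderList n w).Pairwise (fun p q => w q < w p) := by
  rw [orderList, List.pairwise_map]
  have h2 : ((SympE n).sort (· ≤ ·)).reverse.Pairwise (fun p q => q < p) := by
    rw [List.pairwise_reverse]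
    exact (Finset.sortedLT_sort (SympE n)).pairwise
  exact h2.imp (fun {p q} hpq => by simpa using hpq)

lemma sum_le_of_dom (f : ℤ → ℝ) :
    ∀ (k : ℕ) (A B : Finset ℤ), A.card = k → B.card = k →
      (∀ c : ℤ, (A.filter (fun a => c ≤ a)).card ≤ (B.filter (fun a => c ≤ a)).card) →
      (∀ i ∈ A ∪ B, ∀ j ∈ A ∪ B, i < j → f i ≤ f j) →
      ∑ a ∈ A, f a ≤ ∑ b ∈ B, f b := by
  intro k
  induction k with
  | zero =>
    intro A B hA hB _ _
    rw [Finset.card_eq_zero] at hA hB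
    subst hA; subst hB; simp
  | succ k ih =>
    intro A B hA hB hdom hmono
    have hAne : A.Nonempty := Finset.card_pos.mp (by omega)
    have hBne : B.Nonempty := Finset.card_pos.mp (by omega)
    set a := A.max' hAne with ha
    set b := B.max' hBne with hb
    have hab : a ≤ b := by
      have h1 : a ∈ A.filter (fun t => a ≤ t) :=
        Finset.mem_filter.mpr ⟨A.max'_mem hAne, le_refl a⟩
      have h2 : 0 < (B.filter (fun t => a ≤ t)).card :=
        lt_of_lt_of_le (Finset.card_pos.mpr ⟨a, h1⟩) (hdom a)
      obtain ⟨β, hβ⟩ := Finset.card_pos.mp h2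
      obtain ⟨hβB, hβa⟩ := Finset.mem_filter.mp hβ
      exact le_trans hβa (B.le_max' β hβB)
    have hfab : f a ≤ f b := by
      rcases lt_or_eq_of_le hab with h | h
      · exact hmono a (Finset.mem_union_left _ (A.max'_mem hAne)) b
          (Finset.mem_union_right _ (B.max'_mem hBne)) h
      · rw [h]
    have hdom' : ∀ c : ℤ,
        ((A.erase a).filter (fun t => c ≤ t)).card ≤
          ((B.erase b).filter (fun t => c ≤ t)).card := by
      intro c
      by_cases hc : c ≤ a
      · rw [Finset.filter_erase, Finset.filter_erase,
          Finset.card_erase_of_mem (Finset.mem_filter.mpr ⟨A.max'_mem hAne, hc⟩),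
          Finset.card_erase_of_mem (Finset.mem_filter.mpr ⟨B.max'_mem hBne, le_trans hc hab⟩)]
        exact Nat.sub_le_sub_right (hdom c) 1
      · have hempty : (A.erase a).filter (fun t => c ≤ t) = ∅ := by
          apply Finset.eq_empty_of_forall_notMem
          intro t ht
          obtain ⟨ht1, ht2⟩ := Finset.mem_filter.mp ht
          exact hc (le_trans ht2 (A.le_max' t (Finset.mem_of_mem_erase ht1)))
        simp [hempty]
    have hsub : A.erase a ∪ B.erase b ⊆ A ∪ B :=
      Finset.union_subset_union (Finset.erase_subset _ _) (Finset.erase_subset _ _)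
    have hmono' := fun i hi j hj hij => hmono i (hsub hi) j (hsub hj) hij
    have hA' : (A.erase a).card = k := by
      rw [Finset.card_erase_of_mem (A.max'_mem hAne), hA]
      omega
    have hB' : (B.erase b).card = k := by
      rw [Finset.card_erase_of_mem (B.max'_mem hBne), hB]
      omega
    have hsum := ih (A.erase a) (B.erase b) hA' hB' hdom' hmono'
    calc ∑ x ∈ A, f x = f a + ∑ x ∈ A.erase a, f x :=
          (Finset.add_sum_erase A f (A.max'_mem hAne)).symm
      _ ≤ f b + ∑ x ∈ B.erase b, f x := add_le_add hfab hsum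
      _ = ∑ x ∈ B, f x := Finset.add_sum_erase B f (B.max'_mem hBne)
/-- **Sufficiency.** If a nonempty subset-closed family `ℐ` of admissible subsets
of `E_{±n}` satisfies the exchange property, then the collection `ℬ` of maximal
members of `ℐ` forms a symplectic matroid `(E_{±n}, ℬ)`. -/
theorem exchange_gives_symplectic_matroid (n : ℕ) (hn : 0 < n) (ℐ : Finset (Finset ℤ))
    (hne : ℐ.Nonempty)
    (hclosed : ∀ I ∈ ℐ, ∀ I' ⊆ I, I' ∈ ℐ)
    (hadm : ∀ I ∈ ℐ, I ⊆ SympE n ∧ IsAdmissibleSet I)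
    (hex : ExchangeProp ℐ) :
    IsSymplecticMatroid n (maximalMembers ℐ) := by
  classical
  set ℬ := maximalMembers ℐ with hℬdef
  have hmemB : ∀ {B : Finset ℤ}, B ∈ ℬ → B ∈ ℐ ∧ ∀ I ∈ ℐ, B ⊆ I → I = B := by
    intro B hB
    simpa [hℬdef, maximalMembers] using hB
  have hmem_iff : ∀ {S : Finset ℤ}, (∃ D ∈ ℬ, S ⊆ D) ↔ S ∈ ℐ := by
    intro S
    constructor
    · rintro ⟨D, hD, hSD⟩
      exact hclosed D (hmemB hD).1 S hSD
    · intro hS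
      exact exists_maximal_mem hS
  have hBne : ℬ.Nonempty := by
    obtain ⟨I, hI⟩ := hne
    obtain ⟨B, hB, -⟩ := exists_maximal_mem hI
    exact ⟨B, hB⟩
  have hcard_lt : ∀ B ∈ ℬ, ∀ B' ∈ ℬ, ¬ B.card < B'.card := by
    intro B hB B' hB' hlt
    obtain ⟨hBI, hBmax⟩ := hmemB hB
    obtain ⟨hBI', -⟩ := hmemB hB'
    have hno : ∀ y ∈ B' \ B, insert y B ∉ ℐ := by
      intro y hy hins
      have h := hBmax _ hins (Finset.subset_insert _ _)
      exact (Finset.mem_sdiff.mp hy).2 (h ▸ Finset.mem_insert_self y B)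
    obtain ⟨-, x, hxB, hxins, -⟩ := hex B hBI B' hBI' hlt hno
    exact hxB ((hBmax _ hxins (Finset.subset_insert _ _)) ▸ Finset.mem_insert_self x B)
  have hcard : ∀ B ∈ ℬ, ∀ B' ∈ ℬ, B.card = B'.card := fun B hB B' hB' =>
    le_antisymm (not_lt.mp (hcard_lt B' hB' B hB)) (not_lt.mp (hcard_lt B hB B' hB'))
  refine ⟨hBne, fun B hB => hadm B (hmemB hB).1, hcard, ?_⟩
  intro w hw ω hω B' hB'
  have hB'I : B' ∈ ℐ := (hmemB hB').1
  set G := greedySol n ℬ w with hGdef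
  have hGsub : ∃ D ∈ ℬ, G ⊆ D := by
    obtain ⟨B₀, hB₀⟩ := hBne
    obtain ⟨D, hD, hsub⟩ := greedyAux_subset_basis ℬ (orderList n w) ∅
      ⟨B₀, hB₀, Finset.empty_subset _⟩
    exact ⟨D, hD, by simpa [hGdef, greedySol, greedyPicks] using hsub⟩
  have hGI : G ∈ ℐ := hmem_iff.mp hGsub
  have reject : ∀ y ∈ SympE n, y ∉ G →
      ∃ C : Finset ℤ, C ⊆ G ∧ (∀ c ∈ C, w y < w c) ∧ insert y C ∉ ℐ := by
    intro y hy hyG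
    obtain ⟨C, h1, h2, h3⟩ := greedyAux_reject ℬ w (orderList n w) ∅
      (orderList_pairwise n w) y (mem_orderList hw hy)
      (by simpa [hGdef, greedySol, greedyPicks] using hyG)
    refine ⟨C, by simpa [hGdef, greedySol, greedyPicks] using h1,
      fun c hc => (h2 c hc).resolve_left (by simp), fun h => h3 (hmem_iff.mpr h)⟩
  have hGB : G ∈ ℬ := by
    rw [hℬdef]
    refine Finset.mem_filter.mpr ⟨hGI, fun I hI hGI' => ?_⟩
    by_contra hne'
    have hex' : ∃ y ∈ I, y ∉ G := by
      by_contra hno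
      push_neg at hno
      exact hne' (Finset.Subset.antisymm (fun t ht => hno t ht) hGI')
    obtain ⟨y, hyI, hyG⟩ := hex'
    obtain ⟨C, hC1, -, hC3⟩ := reject y ((hadm I hI).1 hyI) hyG
    exact hC3 (hclosed I hI _ (Finset.insert_subset hyI (hC1.trans hGI')))
  -- core domination lemma
  have core : ∀ (c : ℤ) (J : Finset ℤ), J ∈ ℐ → (∀ j ∈ J, c ≤ w j) →
      J.card ≤ (G.filter (fun g => c ≤ w g)).card := by
    intro c J hJ hJc
    by_contra hlt
    push_neg at hlt
    set P := G.filter (fun g => c ≤ w g) with hP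
    have hPsubG : P ⊆ G := Finset.filter_subset _ _
    have hPI : P ∈ ℐ := hclosed G hGI P hPsubG
    have trej : ∀ y, y ∈ SympE n → c ≤ w y → insert y P ∈ ℐ → y ∈ G := by
      intro y hySymp hcy hins
      by_contra hyG
      obtain ⟨C, hC1, hC2, hC3⟩ := reject y hySymp hyG
      have hCP : C ⊆ P := fun t ht =>
        Finset.mem_filter.mpr ⟨hC1 ht, le_of_lt (lt_of_le_of_lt hcy (hC2 t ht))⟩
      exact hC3 (hclosed _ hins _ (Finset.insert_subset_insert y hCP))
    have hhyp : ∀ y ∈ J \ P, insert y P ∉ ℐ := by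
      intro y hy hins
      obtain ⟨hyJ, hyP⟩ := Finset.mem_sdiff.mp hy
      have hyG := trej y ((hadm J hJ).1 hyJ) (hJc y hyJ) hins
      exact hyP (Finset.mem_filter.mpr ⟨hyG, hJc y hyJ⟩)
    obtain ⟨hinad, x, hxP, hx1, hx2⟩ := hex P hPI J hJ hlt hhyp
    have hxSymp : x ∈ SympE n := (hadm _ hx1).1 (Finset.mem_insert_self x P)
    have hxc : w x < c := by
      by_contra h
      push_neg at h
      exact hxP (Finset.mem_filter.mpr ⟨trej x hxSymp h hx1, h⟩)
    obtain ⟨u, huP, huJ⟩ : ∃ u, u ∈ P ∧ -u ∈ J := by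
      simp only [IsAdmissibleSet] at hinad
      push_neg at hinad
      obtain ⟨z, hz1, hz2⟩ := hinad
      rcases Finset.mem_union.mp hz1 with hzP | hzJ
      · rcases Finset.mem_union.mp hz2 with h | h
        · exact absurd h ((hadm P hPI).2 z hzP)
        · exact ⟨z, hzP, h⟩
      · rcases Finset.mem_union.mp hz2 with h | h
        · exact ⟨-z, h, by simpa using hzJ⟩
        · exact absurd h ((hadm J hJ).2 z hzJ)
    have hwneg : ∀ t : ℤ, w (-t) = -(w t) := hw.2
    have hcu : c ≤ -c := by
      have h1 : c ≤ w u := (Finset.mem_filter.mp huP).2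
      have h2 : c ≤ w (-u) := hJc _ huJ
      rw [hwneg] at h2
      omega
    have hcnx : c ≤ w (-x) := by
      rw [hwneg]
      omega
    have hnxG : -x ∉ G := by
      intro h
      have hadm' := (hadm _ hx1).2 x (Finset.mem_insert_self x P)
      exact hadm' (Finset.mem_insert_of_mem (Finset.mem_filter.mpr ⟨h, hcnx⟩))
    obtain ⟨C, hC1, hC2, hC3⟩ := reject (-x) (sympE_neg_mem hxSymp) hnxG
    have hCPJ : C ⊆ P \ negSet J := by
      intro t ht
      refine Finset.mem_sdiff.mpr
        ⟨Finset.mem_filter.mpr ⟨hC1 ht, le_of_lt (lt_of_le_of_lt hcnx (hC2 t ht))⟩, ?_⟩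
      intro htneg
      obtain ⟨j, hjJ, hjt⟩ := Finset.mem_image.mp htneg
      have h1 : c ≤ w j := hJc j hjJ
      have h2 := hC2 t ht
      rw [← hjt, hwneg, hwneg] at h2
      omega
    exact hC3 (hclosed _ hx2 _ (Finset.insert_subset_insert _ hCPJ))
  -- assemble via the summation lemma
  have hkey : ∀ c : ℤ, ((B'.image w).filter (fun a => c ≤ a)).card ≤
      ((G.image w).filter (fun a => c ≤ a)).card := by
    intro c
    have e1 : ((B'.image w).filter (fun a => c ≤ a)) =
        (B'.filter (fun b => c ≤ w b)).image w := by
      ext t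
      simp only [Finset.mem_filter, Finset.mem_image]
      constructor
      · rintro ⟨⟨b, hb, rfl⟩, hcb⟩
        exact ⟨b, ⟨hb, hcb⟩, rfl⟩
      · rintro ⟨b, ⟨hb, hcb⟩, rfl⟩
        exact ⟨⟨b, hb, rfl⟩, hcb⟩
    have e2 : ((G.image w).filter (fun a => c ≤ a)) =
        (G.filter (fun g => c ≤ w g)).image w := by
      ext t
      simp only [Finset.mem_filter, Finset.mem_image]
      constructor
      · rintro ⟨⟨b, hb, rfl⟩, hcb⟩
        exact ⟨b, ⟨hb, hcb⟩, rfl⟩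
      · rintro ⟨b, ⟨hb, hcb⟩, rfl⟩
        exact ⟨⟨b, hb, rfl⟩, hcb⟩
    rw [e1, e2, Finset.card_image_of_injective _ w.injective,
      Finset.card_image_of_injective _ w.injective]
    exact core c (B'.filter (fun b => c ≤ w b))
      (hclosed B' hB'I _ (Finset.filter_subset _ _))
      (fun j hj => (Finset.mem_filter.mp hj).2)
  have hcards : (G.image w).card = (B'.image w).card := by
    rw [Finset.card_image_of_injective _ w.injective,
      Finset.card_image_of_injective _ w.injective]
    exact hcard G hGB B' hB'
  have hmono : ∀ i ∈ B'.image w ∪ G.image w, ∀ j ∈ B'.image w ∪ G.image w,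
      i < j → (fun t => ω (w.symm t)) i ≤ (fun t => ω (w.symm t)) j := by
    intro i hi j hj hij
    have hmem : ∀ t ∈ B'.image w ∪ G.image w, ∃ t₀ ∈ SympE n, w t₀ = t := by
      intro t ht
      rcases Finset.mem_union.mp ht with h | h
      · obtain ⟨b, hb, rfl⟩ := Finset.mem_image.mp h
        exact ⟨b, (hadm B' hB'I).1 hb, rfl⟩
      · obtain ⟨g, hg, rfl⟩ := Finset.mem_image.mp h
        exact ⟨g, (hadm G hGI).1 hg, rfl⟩
    obtain ⟨i₀, hi₀, rfl⟩ := hmem i hi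
    obtain ⟨j₀, hj₀, rfl⟩ := hmem j hj
    simp only [Equiv.symm_apply_apply]
    exact hω i₀ hi₀ j₀ hj₀ hij
  have hsum := sum_le_of_dom (fun t => ω (w.symm t)) (B'.image w).card
    (B'.image w) (G.image w) rfl hcards hkey hmono
  have eB' : ∑ a ∈ B'.image w, ω (w.symm a) = ∑ b ∈ B', ω b := by
    rw [Finset.sum_image (fun x _ y _ h => w.injective h)]
    simp
  have eG : ∑ a ∈ G.image w, ω (w.symm a) = ∑ b ∈ G, ω b := by
    rw [Finset.sum_image (fun x _ y _ h => w.injective h)]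
    simp
  rw [← eB', ← eG]
  exact hsum
end

section
/- Let ℐ be the family of independent sets of a symplectic matroid (E_{±n}, ℬ), and let I and J be members of ℐ such that |I| < |J| and such that for all y ∈ J∖I the set {y} ∪ I is not in ℐ. Then I ∪ J is inadmissible and there exists x ∉ I such that both {x} ∪ I and {−x} ∪ (I ∖ (−J)) are in ℐ. -/
set_option linter.unusedSectionVars false
set_option linter.unusedVariables false
set_option linter.unnecessarySimpa false


/-! ### Basic lemmas -/

lemma mem_SympE {n : ℕ} {x : ℤ} : x ∈ SympE n ↔ x ≠ 0 ∧ -(n:ℤ) ≤ x ∧ x ≤ n := by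
  simp [SympE, Finset.mem_erase, Finset.mem_Icc, and_assoc]

lemma neg_mem_SympE {n : ℕ} {x : ℤ} (h : x ∈ SympE n) : -x ∈ SympE n := by
  rw [mem_SympE] at h ⊢; omega

lemma mem_negSet {S : Finset ℤ} {x : ℤ} : x ∈ negSet S ↔ -x ∈ S := by
  constructor
  · rintro h; rcases Finset.mem_image.1 h with ⟨y, hy, rfl⟩; simpa using hy
  · intro h; exact Finset.mem_image.2 ⟨-x, h, by ring⟩

lemma negSet_negSet {S : Finset ℤ} : negSet (negSet S) = S := by
  ext x; simp [mem_negSet]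

lemma admissible_subset {S T : Finset ℤ} (h : IsAdmissibleSet T) (hs : S ⊆ T) :
    IsAdmissibleSet S := fun s hsS hns => h s (hs hsS) (hs hns)

lemma mem_indepSets {n : ℕ} {ℬ : Finset (Finset ℤ)} {I : Finset ℤ} :
    I ∈ indepSets n ℬ ↔ I ⊆ SympE n ∧ ∃ B ∈ ℬ, I ⊆ B := by
  simp [indepSets, Finset.mem_filter, Finset.mem_powerset]

lemma indep_subset {n : ℕ} {ℬ : Finset (Finset ℤ)} {I I' : Finset ℤ}
    (h : I ∈ indepSets n ℬ) (hs : I' ⊆ I) : I' ∈ indepSets n ℬ := by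
  rw [mem_indepSets] at h ⊢
  exact ⟨hs.trans h.1, h.2.imp fun B hB => ⟨hB.1, hs.trans hB.2⟩⟩

lemma indep_admissible {n : ℕ} {ℬ : Finset (Finset ℤ)}
    (hB : IsSymplecticMatroid n ℬ) {I : Finset ℤ} (h : I ∈ indepSets n ℬ) :
    IsAdmissibleSet I := by
  rw [mem_indepSets] at h
  obtain ⟨B, hBm, hIB⟩ := h.2
  exact admissible_subset ((hB.2.1 B hBm).2) hIB

/-- An admissible subset of `SympE n` has at most `n` elements. -/
lemma adm_card_le {n : ℕ} {S : Finset ℤ} (hS : S ⊆ SympE n) (hadm : IsAdmissibleSet S) :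
    S.card ≤ n := by
  have hinj : Set.InjOn Int.natAbs S := by
    intro a ha b hb hab
    rcases Int.natAbs_eq_natAbs_iff.1 hab with rfl | rfl
    · rfl
    · exact absurd hb (by simpa using hadm _ ha)
  have himg : S.image Int.natAbs ⊆ Finset.Icc 1 n := by
    intro k hk
    rcases Finset.mem_image.1 hk with ⟨a, ha, rfl⟩
    have := mem_SympE.1 (hS ha)
    simp only [Finset.mem_Icc]
    omega
  calc S.card = (S.image Int.natAbs).card := (Finset.card_image_of_injOn hinj).symm
    _ ≤ (Finset.Icc 1 n).card := Finset.card_le_card himg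
    _ = n := by simp

/-! ### Greedy algorithm lemmas -/

lemma greedyAux_subset (ℬ : Finset (Finset ℤ)) :
    ∀ (l : List ℤ) (B : Finset ℤ) (a : ℤ), a ∈ greedyAux ℬ l B → a ∈ l := by
  intro l
  induction l with
  | nil => intro B a h; simp [greedyAux] at h
  | cons x l ih =>
    intro B a h
    rw [greedyAux] at h
    split at h
    · rcases List.mem_cons.1 h with rfl | h
      · exact List.mem_cons_self
      · exact List.mem_cons_of_mem _ (ih _ _ h)
    · exact List.mem_cons_of_mem _ (ih _ _ h)

lemma greedyAux_append_pick (ℬ : Finset (Finset ℤ)) :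
    ∀ (l₁ : List ℤ) (l₂ : List ℤ) (B : Finset ℤ),
      (∃ B' ∈ ℬ, B ∪ l₁.toFinset ⊆ B') →
      greedyAux ℬ (l₁ ++ l₂) B = l₁ ++ greedyAux ℬ l₂ (B ∪ l₁.toFinset) := by
  intro l₁
  induction l₁ with
  | nil => intro l₂ B _; simp
  | cons a l ih =>
    intro l₂ B hex
    obtain ⟨B', hB', hsub⟩ := hex
    have h1 : insert a B ⊆ B' := by
      intro z hz
      rcases Finset.mem_insert.1 hz with rfl | hz
      · exact hsub (by simp)
      · exact hsub (by simp [hz])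
    have hcond : ∃ B' ∈ ℬ, insert a B ⊆ B' := ⟨B', hB', h1⟩
    have hset : insert a B ∪ l.toFinset = B ∪ (a :: l).toFinset := by
      ext z; simp only [Finset.mem_union, Finset.mem_insert, List.toFinset_cons, List.mem_toFinset]; tauto
    have h2 : insert a B ∪ l.toFinset ⊆ B' := by
      rw [hset]
      intro z hz
      rcases Finset.mem_union.1 hz with hz | hz
      · exact hsub (Finset.mem_union_left _ hz)
      · simp only [List.toFinset_cons, Finset.mem_insert, List.mem_toFinset] at hz
        rcases hz with rfl | hz
        · exact hsub (by simp)
        · exact hsub (by simp [hz])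
    rw [List.cons_append, greedyAux, if_pos hcond, ih l₂ (insert a B) ⟨B', hB', h2⟩, hset]
    simp

lemma greedyAux_append_skip (ℬ : Finset (Finset ℤ)) :
    ∀ (l₁ : List ℤ) (l₂ : List ℤ) (B : Finset ℤ),
      (∀ a ∈ l₁, ¬ ∃ B' ∈ ℬ, insert a B ⊆ B') →
      greedyAux ℬ (l₁ ++ l₂) B = greedyAux ℬ l₂ B := by
  intro l₁
  induction l₁ with
  | nil => intro l₂ B _; simp
  | cons a l ih =>
    intro l₂ B hno
    rw [List.cons_append, greedyAux, if_neg (hno a (by simp)), ih]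
    intro z hz
    exact hno z (by simp [hz])
/-! ### Construction of an admissible permutation from a transversal list -/

/-- Forward map: the `i`-th entry of `L` is sent to `n - i`, negatives mirrored. -/
def tFun (n : ℕ) (L : List ℤ) (x : ℤ) : ℤ :=
  if x ∈ L then (n : ℤ) - L.idxOf x
  else if -x ∈ L then (L.idxOf (-x) : ℤ) - n
  else x

def tInv (n : ℕ) (L : List ℤ) (j : ℤ) : ℤ :=
  if 0 < j ∧ j ≤ n then L.getD (n - j.toNat) 0
  else if -(n:ℤ) ≤ j ∧ j < 0 then -(L.getD (n - (-j).toNat) 0)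
  else j

section Trans

variable {n : ℕ} {L : List ℤ}
  (hL1 : ∀ x ∈ L, x ∈ SympE n) (hL2 : L.Nodup) (hL3 : ∀ x ∈ L, -x ∉ L)
  (hL4 : ∀ x ∈ SympE n, x ∈ L ∨ -x ∈ L)

include hL1 hL2 hL3 hL4

lemma trans_length : L.length = n := by
  classical
  have hadm : IsAdmissibleSet L.toFinset := by
    intro s hs hns
    exact hL3 s (List.mem_toFinset.1 hs) (List.mem_toFinset.1 hns)
  have hsub : L.toFinset ⊆ SympE n := fun x hx => hL1 x (List.mem_toFinset.1 hx)
  have h1 : L.toFinset.card ≤ n := adm_card_le hsub hadm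
  have hinj : Set.InjOn Int.natAbs L.toFinset := by
    intro a ha b hb hab
    rcases Int.natAbs_eq_natAbs_iff.1 hab with rfl | rfl
    · rfl
    · exact absurd hb (by simpa using hadm _ ha)
  have h2 : Finset.Icc 1 n ⊆ L.toFinset.image Int.natAbs := by
    intro k hk
    have hks : (k : ℤ) ∈ SympE n := by
      rw [mem_SympE]
      simp only [Finset.mem_Icc] at hk
      omega
    rcases hL4 _ hks with h | h
    · exact Finset.mem_image.2 ⟨(k:ℤ), List.mem_toFinset.2 h, by simp⟩
    · exact Finset.mem_image.2 ⟨-(k:ℤ), List.mem_toFinset.2 h, by simp⟩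
  have h3 : n ≤ L.toFinset.card := by
    calc n = (Finset.Icc 1 n).card := by simp
      _ ≤ (L.toFinset.image Int.natAbs).card := Finset.card_le_card h2
      _ ≤ L.toFinset.card := Finset.card_image_le
  have := List.toFinset_card_of_nodup hL2
  omega

lemma trans_not_mem {x : ℤ} (hx : x ∉ SympE n) : x ∉ L ∧ -x ∉ L := by
  constructor
  · intro h; exact hx (hL1 x h)
  · intro h
    have := hL1 _ h
    exact hx (by simpa using neg_mem_SympE this)

lemma tFun_left_inv : Function.LeftInverse (tInv n L) (tFun n L) := by
  intro x
  have hlen := trans_length hL1 hL2 hL3 hL4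
  by_cases hx : x ∈ L
  · have hi : L.idxOf x < n := hlen ▸ List.idxOf_lt_length_iff.2 hx
    rw [tFun, if_pos hx, tInv, if_pos (by omega)]
    have h1 : ((n:ℤ) - L.idxOf x).toNat = n - L.idxOf x := by omega
    rw [h1]
    have h2 : n - (n - L.idxOf x) = L.idxOf x := by omega
    rw [h2, List.getD_eq_getElem _ _ (by omega)]
    exact List.idxOf_get _
  · by_cases hnx : -x ∈ L
    · have hi : L.idxOf (-x) < n := hlen ▸ List.idxOf_lt_length_iff.2 hnx
      rw [tFun, if_neg hx, if_pos hnx, tInv, if_neg (by omega), if_pos (by omega)]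
      have h1 : (-((L.idxOf (-x) : ℤ) - n)).toNat = n - L.idxOf (-x) := by omega
      rw [h1]
      have h2 : n - (n - L.idxOf (-x)) = L.idxOf (-x) := by omega
      rw [h2, List.getD_eq_getElem _ _ (by omega)]
      have : L.get ⟨L.idxOf (-x), by omega⟩ = -x := List.idxOf_get _
      simp only [List.get_eq_getElem] at this
      rw [this]; ring
    · have hxs : x ∉ SympE n := by
        intro h
        rcases hL4 x h with h' | h' <;> [exact hx h'; exact hnx h']
      have hb : ¬(0 < x ∧ x ≤ (n:ℤ)) ∧ ¬(-(n:ℤ) ≤ x ∧ x < 0) := by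
        rw [mem_SympE] at hxs
        push_neg at hxs
        constructor <;> rintro ⟨h1, h2⟩ <;> omega
      rw [tFun, if_neg hx, if_neg hnx, tInv, if_neg hb.1, if_neg hb.2]

lemma tFun_right_inv : Function.RightInverse (tInv n L) (tFun n L) := by
  intro j
  have hlen := trans_length hL1 hL2 hL3 hL4
  by_cases hj : 0 < j ∧ j ≤ (n:ℤ)
  · have hk : n - j.toNat < L.length := by omega
    rw [tInv, if_pos hj]
    rw [List.getD_eq_getElem _ _ hk]
    have hmem : L[n - j.toNat] ∈ L := List.getElem_mem _
    rw [tFun, if_pos hmem]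
    rw [List.Nodup.idxOf_getElem hL2]
    omega
  · by_cases hj2 : -(n:ℤ) ≤ j ∧ j < 0
    · have hk : n - (-j).toNat < L.length := by omega
      rw [tInv, if_neg hj, if_pos hj2]
      rw [List.getD_eq_getElem _ _ hk]
      have hmem : L[n - (-j).toNat] ∈ L := List.getElem_mem _
      have hnmem : -L[n - (-j).toNat] ∉ L := hL3 _ hmem
      rw [tFun, if_neg hnmem]
      rw [neg_neg, if_pos hmem]
      rw [List.Nodup.idxOf_getElem hL2]
      omega
    · rw [tInv, if_neg hj, if_neg hj2]
      have hxs : j ∉ SympE n := by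
        rw [mem_SympE]; push_neg; intro h1; omega
      obtain ⟨h1, h2⟩ := trans_not_mem hL1 hL2 hL3 hL4 hxs
      rw [tFun, if_neg h1, if_neg h2]

/-- The admissible permutation induced by a transversal list. -/
def transPerm : Equiv.Perm ℤ :=
  ⟨tFun n L, tInv n L, tFun_left_inv hL1 hL2 hL3 hL4, tFun_right_inv hL1 hL2 hL3 hL4⟩

lemma transPerm_admissible : IsAdmissiblePerm n (transPerm hL1 hL2 hL3 hL4) := by
  have hlen := trans_length hL1 hL2 hL3 hL4
  constructor
  · intro x hx
    show tFun n L x ∈ SympE n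
    rcases hL4 x hx with h | h
    · have hi : L.idxOf x < n := hlen ▸ List.idxOf_lt_length_iff.2 h
      rw [tFun, if_pos h, mem_SympE]
      omega
    · have hx2 : x ∉ L := by
        intro h'
        exact hL3 x h' h
      have hi : L.idxOf (-x) < n := hlen ▸ List.idxOf_lt_length_iff.2 h
      rw [tFun, if_neg hx2, if_pos h, mem_SympE]
      omega
  · intro x
    show tFun n L (-x) = -(tFun n L x)
    by_cases hx : x ∈ L
    · have h1 : -x ∉ L := hL3 x hx
      rw [tFun, tFun, if_neg h1, neg_neg, if_pos hx, if_pos hx]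
      ring
    · by_cases hnx : -x ∈ L
      · rw [tFun, tFun, if_pos hnx, if_neg hx, if_pos hnx]
        ring
      · have h2 : -(-x) ∉ L := by rwa [neg_neg]
        rw [tFun, tFun, if_neg hnx, if_neg h2, if_neg hx, if_neg hnx]

end Trans
/-! ### Computation of the order list for `transPerm` -/

lemma reverse_map_range {α : Type*} (n : ℕ) (f : ℕ → α) :
    ((List.range n).map f).reverse = (List.range n).map (fun i => f (n - 1 - i)) := by
  apply List.ext_getElem
  · simp
  · intro i h1 h2
    simp only [List.getElem_reverse, List.getElem_map, List.getElem_range, List.length_map,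
      List.length_range]

lemma sympE_sort_eq (n : ℕ) :
    (SympE n).sort (· ≤ ·) =
      ((List.range n).map (fun i : ℕ => (i : ℤ) - n)) ++
        ((List.range n).map (fun i : ℕ => (i : ℤ) + 1)) := by
  set myL := ((List.range n).map (fun i : ℕ => (i : ℤ) - n)) ++
      ((List.range n).map (fun i : ℕ => (i : ℤ) + 1)) with hmyL
  have hnd : myL.Nodup := by
    rw [hmyL, List.nodup_append']
    refine ⟨?_, ?_, ?_⟩
    · exact List.nodup_range.map (fun a b h => by omega)
    · exact List.nodup_range.map (fun a b h => by omega)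
    · intro a ha hb
      simp only [List.mem_map, List.mem_range] at ha hb
      obtain ⟨i, hi, rfl⟩ := ha
      obtain ⟨j, hj, hji⟩ := hb
      omega
  have htf : myL.toFinset = SympE n := by
    ext x
    simp only [hmyL, List.toFinset_append, Finset.mem_union, List.mem_toFinset, List.mem_map,
      List.mem_range, mem_SympE]
    constructor
    · rintro (⟨i, hi, rfl⟩ | ⟨i, hi, rfl⟩) <;> (refine ⟨by omega, by omega, by omega⟩)
    · rintro ⟨h0, h1, h2⟩
      rcases lt_or_gt_of_ne h0 with h | h
      · left; exact ⟨(x + n).toNat, by omega, by omega⟩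
      · right; exact ⟨(x - 1).toNat, by omega, by omega⟩
  have hsort : myL.Pairwise (· ≤ ·) := by
    rw [hmyL]
    apply List.pairwise_append.2
    refine ⟨?_, ?_, ?_⟩
    · exact List.Pairwise.map _ (fun a b (h : a < b) => by omega) List.pairwise_lt_range
    · exact List.Pairwise.map _ (fun a b (h : a < b) => by omega) List.pairwise_lt_range
    · intro a ha b hb
      simp only [List.mem_map, List.mem_range] at ha hb
      obtain ⟨i, hi, rfl⟩ := ha
      obtain ⟨j, hj, rfl⟩ := hb
      omega
  have hperm : List.Perm ((SympE n).sort (· ≤ ·)) myL := by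
    apply List.perm_of_nodup_nodup_toFinset_eq (Finset.sort_nodup _ _) hnd
    rw [htf, Finset.sort_toFinset]
  exact List.Perm.eq_of_pairwise' (Finset.pairwise_sort _ _) hsort hperm

section Trans2

variable {n : ℕ} {L : List ℤ}
  (hL1 : ∀ x ∈ L, x ∈ SympE n) (hL2 : L.Nodup) (hL3 : ∀ x ∈ L, -x ∉ L)
  (hL4 : ∀ x ∈ SympE n, x ∈ L ∨ -x ∈ L)

include hL1 hL2 hL3 hL4

lemma orderList_transPerm :
    orderList n (transPerm hL1 hL2 hL3 hL4) = L ++ (L.map (fun x => -x)).reverse := by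
  have hlen := trans_length hL1 hL2 hL3 hL4
  rw [orderList, sympE_sort_eq, List.reverse_append, List.map_append,
    reverse_map_range, reverse_map_range, List.map_map, List.map_map]
  congr 1
  · -- positive part maps to L
    apply List.ext_getElem
    · simp [hlen]
    · intro i h1 h2
      have hi : i < n := by omega
      simp only [List.getElem_map, List.getElem_range, Function.comp_apply]
      show tInv n L _ = _
      rw [tInv, if_pos (by constructor <;> omega)]
      have harg : (n : ℕ) - (((n - 1 - i : ℕ) : ℤ) + 1).toNat = i := by omega
      rw [harg, List.getD_eq_getElem _ _ (by omega)]
  · -- negative part maps to (L.map neg).reverse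
    apply List.ext_getElem
    · simp [hlen]
    · intro i h1 h2
      have hi : i < n := by
        simp only [List.length_map, List.length_range] at h1
        omega
      simp only [List.getElem_map, List.getElem_range, Function.comp_apply,
        List.getElem_reverse, List.length_map]
      show tInv n L _ = _
      rw [tInv, if_neg (by rintro ⟨h, h'⟩; omega), if_pos (by constructor <;> omega)]
      have harg : (n : ℕ) - (-(((n - 1 - i : ℕ) : ℤ) - n)).toNat = n - 1 - i := by omega
      rw [harg, List.getD_eq_getElem _ _ (by omega)]
      simp only [hlen]

end Trans2
/-! ### Threshold weight functions -/

noncomputable def thrW (w : Equiv.Perm ℤ) (t : ℤ) : ℤ → ℝ := fun x => if t ≤ w x then 1 else 0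

lemma thrW_compatible (n : ℕ) (w : Equiv.Perm ℤ) (t : ℤ) : IsCompatibleWeight n w (thrW w t) := by
  intro i _ j _ hij
  unfold thrW
  by_cases h : t ≤ w i
  · rw [if_pos h, if_pos (by omega)]
  · rw [if_neg h]
    split <;> norm_num

lemma sum_thrW (w : Equiv.Perm ℤ) (t : ℤ) (B : Finset ℤ) :
    ∑ b ∈ B, thrW w t b = ((B.filter (fun b => t ≤ w b)).card : ℝ) := by
  unfold thrW
  rw [Finset.sum_ite, Finset.sum_const, Finset.sum_const]
  simp

lemma mem_take_iff_indexOf {L : List ℤ} (hnd : L.Nodup) {m : ℕ} {x : ℤ} (hx : x ∈ L) :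
    x ∈ L.take m ↔ L.idxOf x < m := by
  constructor
  · intro h
    obtain ⟨i, hi, hxe⟩ := List.getElem_of_mem h
    have hi' : i < L.length := by
      have := List.length_take (i := m) (l := L)
      omega
    have him : i < m := by
      have := List.length_take (i := m) (l := L)
      omega
    rw [List.getElem_take] at hxe
    subst hxe
    rw [List.Nodup.idxOf_getElem hnd]
    exact him
  · intro h
    have hidx : L.idxOf x < L.length := List.idxOf_lt_length_iff.2 hx
    have hmem : (L.take m)[L.idxOf x]'(by simp [List.length_take]; omega) ∈ L.take m :=
      List.getElem_mem _
    have hxe : L[L.idxOf x]'hidx = x := by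
      have h2 := List.idxOf_get (a := x) (l := L) hidx
      simpa using h2
    rwa [List.getElem_take, hxe] at hmem

section Trans3

variable {n : ℕ} {L : List ℤ}
  (hL1 : ∀ x ∈ L, x ∈ SympE n) (hL2 : L.Nodup) (hL3 : ∀ x ∈ L, -x ∉ L)
  (hL4 : ∀ x ∈ SympE n, x ∈ L ∨ -x ∈ L)

include hL1 hL2 hL3 hL4

lemma transPerm_apply (x : ℤ) : (transPerm hL1 hL2 hL3 hL4) x = tFun n L x := rfl

/-- Top-threshold membership: the elements of `SympE n` with the `m` largest
`w`-values are exactly the first `m` entries of `L`. -/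
lemma transPerm_top_iff {m : ℕ} (hm : m ≤ n) {x : ℤ} (hx : x ∈ SympE n) :
    ((n : ℤ) - m + 1 ≤ (transPerm hL1 hL2 hL3 hL4) x ↔ x ∈ L.take m) := by
  have hlen := trans_length hL1 hL2 hL3 hL4
  rw [transPerm_apply]
  by_cases hxL : x ∈ L
  · have hidx : L.idxOf x < n := hlen ▸ List.idxOf_lt_length_iff.2 hxL
    rw [tFun, if_pos hxL, mem_take_iff_indexOf hL2 hxL]
    omega
  · have hnx : -x ∈ L := (hL4 x hx).resolve_left hxL
    have hidx : L.idxOf (-x) < n := hlen ▸ List.idxOf_lt_length_iff.2 hnx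
    rw [tFun, if_neg hxL, if_pos hnx]
    constructor
    · intro h; omega
    · intro h; exact absurd (List.mem_of_mem_take h) hxL

/-- Bottom-threshold membership: the elements of `SympE n` outside the `k` smallest
`w`-values are exactly those whose negative is not among the first `k` entries of `L`. -/
lemma transPerm_bot_iff {k : ℕ} (hk : k ≤ n) {x : ℤ} (hx : x ∈ SympE n) :
    (-(n : ℤ) + k ≤ (transPerm hL1 hL2 hL3 hL4) x ↔ -x ∉ L.take k) := by
  have hlen := trans_length hL1 hL2 hL3 hL4
  rw [transPerm_apply]
  by_cases hxL : x ∈ L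
  · have hidx : L.idxOf x < n := hlen ▸ List.idxOf_lt_length_iff.2 hxL
    rw [tFun, if_pos hxL]
    constructor
    · intro _ hc
      exact hL3 x hxL (List.mem_of_mem_take hc)
    · intro _; omega
  · have hnx : -x ∈ L := (hL4 x hx).resolve_left hxL
    have hidx : L.idxOf (-x) < n := hlen ▸ List.idxOf_lt_length_iff.2 hnx
    rw [tFun, if_neg hxL, if_pos hnx, mem_take_iff_indexOf hL2 hnx]
    omega

end Trans3
/-! ### Helper lemmas for runs -/

lemma mem_mirror {l : List ℤ} {z : ℤ} : z ∈ (l.map (fun x => -x)).reverse ↔ -z ∈ l := by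
  simp only [List.mem_reverse, List.mem_map]
  constructor
  · rintro ⟨a, ha, rfl⟩; simpa using ha
  · intro h; exact ⟨-z, h, by ring⟩

lemma indep_mem_SympE {n : ℕ} {ℬ : Finset (Finset ℤ)} {I : Finset ℤ}
    (h : I ∈ indepSets n ℬ) : I ⊆ SympE n := (mem_indepSets.1 h).1

/-- The augmentation lemma (F3): if `I, J` are independent, `|I| < |J|` and `I ∪ J` is
admissible, then some element of `J \ I` extends `I`. -/
lemma augmentation {n : ℕ} {ℬ : Finset (Finset ℤ)} (hB : IsSymplecticMatroid n ℬ)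
    {I J : Finset ℤ} (hI : I ∈ indepSets n ℬ) (hJ : J ∈ indepSets n ℬ)
    (hcard : I.card < J.card) (hadm : IsAdmissibleSet (I ∪ J)) :
    ∃ y ∈ J \ I, insert y I ∈ indepSets n ℬ := by
  classical
  by_contra hno
  push_neg at hno
  -- basic data
  have hIS : I ⊆ SympE n := indep_mem_SympE hI
  have hJS : J ⊆ SympE n := indep_mem_SympE hJ
  obtain ⟨BI, hBIm, hIBI⟩ := (mem_indepSets.1 hI).2
  obtain ⟨BJ, hBJm, hJBJ⟩ := (mem_indepSets.1 hJ).2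
  set D : Finset ℤ := J \ I with hD
  set X : Finset ℤ := (Finset.Icc (1:ℤ) n).filter (fun k => k ∉ I ∪ J ∧ -k ∉ I ∪ J) with hX
  have hXS : X ⊆ SympE n := by
    intro k hk
    simp only [hX, Finset.mem_filter, Finset.mem_Icc] at hk
    rw [mem_SympE]; omega
  have hXIJ : ∀ k ∈ X, k ∉ I ∪ J ∧ -k ∉ I ∪ J := by
    intro k hk
    simp only [hX, Finset.mem_filter] at hk
    exact hk.2
  set lI := I.toList
  set lD := D.toList
  set lX := X.toList
  set L : List ℤ := (lI ++ lD) ++ lX with hL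
  have hmemL : ∀ x, x ∈ L ↔ x ∈ I ∨ x ∈ D ∨ x ∈ X := by
    intro x
    simp [hL, lI, lD, lX, List.mem_append, Finset.mem_toList, or_assoc]
  have hDI : ∀ x ∈ D, x ∉ I := by intro x hx; exact (Finset.mem_sdiff.1 hx).2
  have hDJ : ∀ x ∈ D, x ∈ J := by intro x hx; exact (Finset.mem_sdiff.1 hx).1
  -- transversal hypotheses
  have hL1 : ∀ x ∈ L, x ∈ SympE n := by
    intro x hx
    rcases (hmemL x).1 hx with h | h | h
    · exact hIS h
    · exact hJS (hDJ x h)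
    · exact hXS h
  have hL3 : ∀ x ∈ L, -x ∉ L := by
    intro x hx hnx
    rcases (hmemL x).1 hx with h | h | h <;> rcases (hmemL (-x)).1 hnx with h' | h' | h'
    · exact hadm x (Finset.mem_union_left _ h) (Finset.mem_union_left _ h')
    · exact hadm x (Finset.mem_union_left _ h) (Finset.mem_union_right _ (hDJ _ h'))
    · exact (hXIJ _ h').2 (by simpa using Finset.mem_union_left J h)
    · exact hadm x (Finset.mem_union_right _ (hDJ _ h)) (Finset.mem_union_left _ h')
    · exact hadm x (Finset.mem_union_right _ (hDJ _ h)) (Finset.mem_union_right _ (hDJ _ h'))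
    · exact (hXIJ _ h').2 (by simpa using Finset.mem_union_right I (hDJ _ h))
    · exact (hXIJ _ h).2 (Finset.mem_union_left _ h')
    · exact (hXIJ _ h).2 (Finset.mem_union_right _ (hDJ _ h'))
    · have h1 := (Finset.mem_Icc.1 (Finset.mem_filter.1 h).1).1
      have h2 := (Finset.mem_Icc.1 (Finset.mem_filter.1 h').1).1
      omega
  have hL2 : L.Nodup := by
    rw [hL, List.nodup_append', List.nodup_append']
    refine ⟨⟨Finset.nodup_toList I, Finset.nodup_toList D, ?_⟩, Finset.nodup_toList X, ?_⟩
    · intro a ha hb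
      exact hDI a (by simpa [lD, Finset.mem_toList] using hb) (by simpa [lI, Finset.mem_toList] using ha)
    · intro a ha hb
      have haIJ : a ∈ I ∪ J := by
        rcases List.mem_append.1 ha with h | h
        · exact Finset.mem_union_left _ (by simpa [lI, Finset.mem_toList] using h)
        · exact Finset.mem_union_right _ (hDJ a (by simpa [lD, Finset.mem_toList] using h))
      exact (hXIJ a (by simpa [lX, Finset.mem_toList] using hb)).1 haIJ
  have hL4 : ∀ x ∈ SympE n, x ∈ L ∨ -x ∈ L := by
    intro x hx
    by_cases h1 : x ∈ L
    · exact Or.inl h1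
    by_cases h2 : -x ∈ L
    · exact Or.inr h2
    exfalso
    have hxs := mem_SympE.1 hx
    have hxI : x ∉ I ∪ J ∧ -x ∉ I ∪ J := by
      constructor
      · intro hc
        rcases Finset.mem_union.1 hc with hc | hc
        · exact h1 ((hmemL x).2 (Or.inl hc))
        · by_cases hcI : x ∈ I
          · exact h1 ((hmemL x).2 (Or.inl hcI))
          · exact h1 ((hmemL x).2 (Or.inr (Or.inl (Finset.mem_sdiff.2 ⟨hc, hcI⟩))))
      · intro hc
        rcases Finset.mem_union.1 hc with hc | hc
        · exact h2 ((hmemL (-x)).2 (Or.inl hc))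
        · by_cases hcI : -x ∈ I
          · exact h2 ((hmemL (-x)).2 (Or.inl hcI))
          · exact h2 ((hmemL (-x)).2 (Or.inr (Or.inl (Finset.mem_sdiff.2 ⟨hc, hcI⟩))))
    have hax : |x| ∈ X := by
      simp only [hX, Finset.mem_filter, Finset.mem_Icc]
      rcases abs_cases x with ⟨he, _⟩ | ⟨he, _⟩
      · exact ⟨by omega, by rw [he]; exact hxI.1, by rw [he]; exact hxI.2⟩
      · exact ⟨by omega, by rw [he]; exact hxI.2, by rw [he]; simpa using hxI.1⟩
    rcases abs_cases x with ⟨he, _⟩ | ⟨he, _⟩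
    · exact h1 ((hmemL x).2 (Or.inr (Or.inr (he ▸ hax))))
    · exact h2 ((hmemL (-x)).2 (Or.inr (Or.inr (he ▸ hax))))
  -- the permutation and the greedy run
  set w := transPerm hL1 hL2 hL3 hL4 with hw
  have horder := orderList_transPerm hL1 hL2 hL3 hL4
  set M : List ℤ := (L.map (fun x => -x)).reverse with hM
  have hgp : greedyPicks n ℬ w = lI ++ greedyAux ℬ (lX ++ M) I := by
    rw [greedyPicks, horder]
    have hassoc : L ++ M = lI ++ (lD ++ (lX ++ M)) := by
      simp [hL, List.append_assoc]
    rw [hassoc]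
    rw [greedyAux_append_pick ℬ lI _ ∅ ⟨BI, hBIm, by
      intro z hz
      rcases Finset.mem_union.1 hz with hz | hz
      · simp at hz
      · exact hIBI (by simpa [lI, Finset.mem_toList] using hz)⟩]
    congr 1
    have hIfin : (∅ : Finset ℤ) ∪ lI.toFinset = I := by
      simp [lI]
    rw [hIfin]
    rw [greedyAux_append_skip ℬ lD _ I]
    intro a ha
    rintro ⟨B', hB'm, hsub⟩
    have haD : a ∈ D := by simpa [lD, Finset.mem_toList] using ha
    exact hno a haD (mem_indepSets.2 ⟨by
      intro z hz
      rcases Finset.mem_insert.1 hz with rfl | hz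
      · exact hJS (hDJ _ haD)
      · exact hIS hz, ⟨B', hB'm, hsub⟩⟩)
  -- the greedy solution
  set tp := greedyAux ℬ (lX ++ M) I with htp
  have hsol : greedySol n ℬ w = I ∪ tp.toFinset := by
    rw [greedySol, hgp]
    simp [lI]
  -- tail picks are outside I ∪ D
  have htpout : ∀ z ∈ tp, z ∉ I ∪ D := by
    intro z hz hzc
    have hzl : z ∈ lX ++ M := greedyAux_subset ℬ _ _ _ hz
    have hzIJ : z ∈ I ∪ J := by
      rcases Finset.mem_union.1 hzc with h | h
      · exact Finset.mem_union_left _ h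
      · exact Finset.mem_union_right _ (hDJ _ h)
    rcases List.mem_append.1 hzl with h | h
    · exact (hXIJ z (by simpa [lX, Finset.mem_toList] using h)).1 hzIJ
    · have hnz : -z ∈ L := by rw [hM] at h; exact mem_mirror.1 h
      rcases (hmemL (-z)).1 hnz with h' | h' | h'
      · exact hadm z hzIJ (Finset.mem_union_left _ h')
      · exact hadm z hzIJ (Finset.mem_union_right _ (hDJ _ h'))
      · exact (hXIJ _ h').2 (by simpa using hzIJ)
  -- threshold weight
  have hmn : I.card + D.card ≤ n := by
    have hd : Disjoint I D := by
      rw [Finset.disjoint_right]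
      intro a ha
      exact hDI a ha
    have hcard2 : (I ∪ D).card = I.card + D.card := Finset.card_union_of_disjoint hd
    have hsub : I ∪ D ⊆ SympE n := by
      intro z hz
      rcases Finset.mem_union.1 hz with h | h
      · exact hIS h
      · exact hJS (hDJ _ h)
    have hadm2 : IsAdmissibleSet (I ∪ D) := by
      apply admissible_subset hadm
      intro z hz
      rcases Finset.mem_union.1 hz with h | h
      · exact Finset.mem_union_left _ h
      · exact Finset.mem_union_right _ (hDJ _ h)
    have := adm_card_le hsub hadm2
    omega
  set m : ℕ := I.card + D.card with hm
  set t : ℤ := (n : ℤ) - m + 1 with ht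
  have htake : L.take m = lI ++ lD := by
    have hlen : (lI ++ lD).length = m := by
      simp [lI, lD, hm]
    rw [hL, ← hlen, List.take_left]
  have htop : ∀ x ∈ SympE n, (t ≤ w x ↔ x ∈ I ∪ D) := by
    intro x hx
    rw [hw, ht, transPerm_top_iff hL1 hL2 hL3 hL4 hmn hx, htake]
    simp [lI, lD, List.mem_append, Finset.mem_toList, Finset.mem_union]
  -- counting
  have hcount : ∀ S : Finset ℤ, S ⊆ SympE n →
      (S.filter (fun b => t ≤ w b)) = S ∩ (I ∪ D) := by
    intro S hS
    ext z
    simp only [Finset.mem_filter, Finset.mem_inter]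
    constructor
    · rintro ⟨hz, hz2⟩
      exact ⟨hz, (htop z (hS hz)).1 hz2⟩
    · rintro ⟨hz, hz2⟩
      exact ⟨hz, (htop z (hS hz)).2 hz2⟩
  have hSgS : (I ∪ tp.toFinset : Finset ℤ) ⊆ SympE n := by
    intro z hz
    rcases Finset.mem_union.1 hz with h | h
    · exact hIS h
    · have hzl : z ∈ lX ++ M := greedyAux_subset ℬ _ _ _ (List.mem_toFinset.1 h)
      rcases List.mem_append.1 hzl with h' | h'
      · exact hXS (by simpa [lX, Finset.mem_toList] using h')
      · rw [hM] at h'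
        have := hL1 _ (mem_mirror.1 h')
        simpa using neg_mem_SympE this
  have hgcount : ((I ∪ tp.toFinset) ∩ (I ∪ D)) = I := by
    ext z
    simp only [Finset.mem_inter, Finset.mem_union, List.mem_toFinset]
    constructor
    · rintro ⟨hz1 | hz1, hz2⟩
      · exact hz1
      · exact absurd (Finset.mem_union.2 hz2) (htpout z hz1)
    · intro hz
      exact ⟨Or.inl hz, Or.inl hz⟩
  have hBJS : BJ ⊆ SympE n := (hB.2.1 BJ hBJm).1
  have hJsub : J ⊆ BJ ∩ (I ∪ D) := by
    intro z hz
    refine Finset.mem_inter.2 ⟨hJBJ hz, ?_⟩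
    by_cases h : z ∈ I
    · exact Finset.mem_union_left _ h
    · exact Finset.mem_union_right _ (Finset.mem_sdiff.2 ⟨hz, h⟩)
  -- optimality
  have hopt := hB.2.2.2 w (transPerm_admissible hL1 hL2 hL3 hL4) (thrW w t)
    (thrW_compatible n w t) BJ hBJm
  rw [hsol] at hopt
  rw [sum_thrW, sum_thrW, hcount BJ hBJS, hcount _ hSgS, hgcount] at hopt
  have h1 : (J.card : ℝ) ≤ ((BJ ∩ (I ∪ D)).card : ℝ) := by
    exact_mod_cast Nat.cast_le.2 (Finset.card_le_card hJsub)
  have h3 : (J.card : ℝ) ≤ (I.card : ℝ) := le_trans h1 hopt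
  have h4 : J.card ≤ I.card := by exact_mod_cast h3
  omega
/-! ### The main exchange run -/

lemma main_run {n : ℕ} {ℬ : Finset (Finset ℤ)} (hB : IsSymplecticMatroid n ℬ)
    {I J : Finset ℤ} (hI : I ∈ indepSets n ℬ) (hJ : J ∈ indepSets n ℬ)
    (hcard : I.card < J.card) (hy : ∀ y ∈ J \ I, insert y I ∉ indepSets n ℬ)
    (hAJ : I \ negSet J ⊆ J) :
    ∃ x, x ∉ I ∧ insert x I ∈ indepSets n ℬ ∧ insert (-x) (I \ negSet J) ∈ indepSets n ℬ := by
  classical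
  by_contra hW
  push_neg at hW
  -- basic data
  have hIS : I ⊆ SympE n := indep_mem_SympE hI
  have hJS : J ⊆ SympE n := indep_mem_SympE hJ
  have hIadm : IsAdmissibleSet I := indep_admissible hB hI
  have hJadm : IsAdmissibleSet J := indep_admissible hB hJ
  obtain ⟨BI, hBIm, hIBI⟩ := (mem_indepSets.1 hI).2
  obtain ⟨BJ, hBJm, hJBJ⟩ := (mem_indepSets.1 hJ).2
  set A : Finset ℤ := I \ negSet J with hA
  set I₂ : Finset ℤ := I ∩ negSet J with hI₂
  have hAI₂ : A ∪ I₂ = I := Finset.sdiff_union_inter I (negSet J)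
  have hASub : A ⊆ I := Finset.sdiff_subset
  have hI₂Sub : I₂ ⊆ I := Finset.inter_subset_left
  set Ext : Finset ℤ := (SympE n).filter (fun x => x ∉ I ∧ insert x I ∈ indepSets n ℬ) with hExt
  have mem_Ext : ∀ x, x ∈ Ext ↔ (x ∉ I ∧ insert x I ∈ indepSets n ℬ) := by
    intro x
    simp only [hExt, Finset.mem_filter, and_iff_right_iff_imp]
    rintro ⟨_, hx2⟩
    exact indep_mem_SympE hx2 (Finset.mem_insert_self _ _)
  have hExtS : Ext ⊆ SympE n := Finset.filter_subset _ _
  have hExtI : ∀ x ∈ Ext, x ∉ I := fun x hx => ((mem_Ext x).1 hx).1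
  have hExtnI : ∀ x ∈ Ext, -x ∉ I := by
    intro x hx hc
    obtain ⟨hx1, hx2⟩ := (mem_Ext x).1 hx
    exact indep_admissible hB hx2 x (Finset.mem_insert_self _ _) (Finset.mem_insert_of_mem hc)
  have hExtJ : ∀ x ∈ Ext, x ∉ J := by
    intro x hx hc
    obtain ⟨hx1, hx2⟩ := (mem_Ext x).1 hx
    exact hy x (Finset.mem_sdiff.2 ⟨hc, hx1⟩) hx2
  have hExtnJ : ∀ x ∈ Ext, -x ∉ J := by
    intro x hx hc
    obtain ⟨hx1, hx2⟩ := (mem_Ext x).1 hx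
    have hsub : insert (-x) A ⊆ J := by
      intro z hz
      rcases Finset.mem_insert.1 hz with rfl | hz
      · exact hc
      · exact hAJ hz
    exact hW x hx1 hx2 (indep_subset hJ hsub)
  have hExtadm : ∀ x ∈ Ext, -x ∉ Ext := by
    intro x hx hc
    obtain ⟨hx1, hx2⟩ := (mem_Ext x).1 hx
    obtain ⟨hc1, hc2⟩ := (mem_Ext (-x)).1 hc
    have hsub : insert (-x) A ⊆ insert (-x) I := by
      intro z hz
      rcases Finset.mem_insert.1 hz with rfl | hz
      · exact Finset.mem_insert_self _ _
      · exact Finset.mem_insert_of_mem (hASub hz)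
    exact hW x hx1 hx2 (indep_subset hc2 hsub)
  set J₁ : Finset ℤ := (J \ I) \ negSet I with hJ₁
  have hJ₁J : J₁ ⊆ J := fun z hz => (Finset.mem_sdiff.1 (Finset.mem_sdiff.1 hz).1).1
  have hJ₁I : ∀ z ∈ J₁, z ∉ I := fun z hz => (Finset.mem_sdiff.1 (Finset.mem_sdiff.1 hz).1).2
  have hJ₁nI : ∀ z ∈ J₁, -z ∉ I := by
    intro z hz hc
    exact (Finset.mem_sdiff.1 hz).2 (mem_negSet.2 (by simpa using hc))
  set F : Finset ℤ := I ∪ J ∪ Ext ∪ negSet Ext with hF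
  set X : Finset ℤ := (Finset.Icc (1:ℤ) n).filter (fun k => k ∉ F ∧ -k ∉ F) with hX
  have hXS : X ⊆ SympE n := by
    intro k hk
    simp only [hX, Finset.mem_filter, Finset.mem_Icc] at hk
    rw [mem_SympE]; omega
  have hXF : ∀ k ∈ X, k ∉ F ∧ -k ∉ F := by
    intro k hk
    simp only [hX, Finset.mem_filter] at hk
    exact hk.2
  have hXpos : ∀ k ∈ X, 1 ≤ k := by
    intro k hk
    simp only [hX, Finset.mem_filter, Finset.mem_Icc] at hk
    exact hk.1.1
  have hIF : I ⊆ F := by intro z hz; simp [hF, hz]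
  have hJF : J ⊆ F := by intro z hz; simp [hF, hz]
  have hExtF : Ext ⊆ F := by intro z hz; simp [hF, hz]
  have hnExtF : negSet Ext ⊆ F := by intro z hz; simp [hF, hz]
  -- the transversal list
  set lA := A.toList
  set lE := (negSet Ext).toList
  set lI₂ := I₂.toList
  set lJ₁ := J₁.toList
  set lX := X.toList
  set L : List ℤ := (lA ++ lE) ++ (lI₂ ++ (lJ₁ ++ lX)) with hL
  have hmemL : ∀ x, x ∈ L ↔ x ∈ A ∨ x ∈ negSet Ext ∨ x ∈ I₂ ∨ x ∈ J₁ ∨ x ∈ X := by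
    intro x
    simp [hL, lA, lE, lI₂, lJ₁, lX, List.mem_append, Finset.mem_toList, or_assoc]
  have hL1 : ∀ x ∈ L, x ∈ SympE n := by
    intro x hx
    rcases (hmemL x).1 hx with h | h | h | h | h
    · exact hIS (hASub h)
    · rw [mem_negSet] at h; simpa using neg_mem_SympE (hExtS h)
    · exact hIS (hI₂Sub h)
    · exact hJS (hJ₁J h)
    · exact hXS h
  have hL3 : ∀ x ∈ L, -x ∉ L := by
    have hcases : ∀ x : ℤ, x ∈ L → (x ∈ I ∨ x ∈ negSet Ext ∨ x ∈ J₁ ∨ x ∈ X) := by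
      intro x hx
      rcases (hmemL x).1 hx with h | h | h | h | h
      · exact Or.inl (hASub h)
      · exact Or.inr (Or.inl h)
      · exact Or.inl (hI₂Sub h)
      · exact Or.inr (Or.inr (Or.inl h))
      · exact Or.inr (Or.inr (Or.inr h))
    intro x hx hnx
    rcases hcases x hx with h | h | h | h <;> rcases hcases (-x) hnx with h' | h' | h' | h'
    -- x ∈ I
    · exact hIadm x h h'
    · have hxe : x ∈ Ext := by
        have := mem_negSet.1 h'
        rwa [neg_neg] at this
      exact hExtI x hxe h
    · exact hJ₁nI _ h' (by rwa [neg_neg])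
    · exact (hXF _ h').2 (by rw [neg_neg]; exact hIF h)
    -- x ∈ negSet Ext
    · have hxe : -x ∈ Ext := mem_negSet.1 h
      exact hExtI _ hxe h'
    · have hxe : -x ∈ Ext := mem_negSet.1 h
      have hxe' : x ∈ Ext := by
        have := mem_negSet.1 h'
        rwa [neg_neg] at this
      exact hExtadm x hxe' hxe
    · have hxe : -x ∈ Ext := mem_negSet.1 h
      exact hExtJ _ hxe (hJ₁J h')
    · exact (hXF _ h').2 (by rw [neg_neg]; exact hnExtF h)
    -- x ∈ J₁
    · exact hJ₁nI _ h h'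
    · have hxe : x ∈ Ext := by
        have := mem_negSet.1 h'
        rwa [neg_neg] at this
      exact hExtJ _ hxe (hJ₁J h)
    · exact hJadm x (hJ₁J h) (hJ₁J h')
    · exact (hXF _ h').2 (by rw [neg_neg]; exact hJF (hJ₁J h))
    -- x ∈ X
    · exact (hXF _ h).2 (hIF h')
    · exact (hXF _ h).2 (hnExtF h')
    · exact (hXF _ h).2 (hJF (hJ₁J h'))
    · have := hXpos _ h; have := hXpos _ h'; omega
  have hdisj : ∀ x, (x ∈ A → x ∉ negSet Ext ∧ x ∉ I₂ ∧ x ∉ J₁ ∧ x ∉ X) ∧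
      (x ∈ negSet Ext → x ∉ I₂ ∧ x ∉ J₁ ∧ x ∉ X) ∧
      (x ∈ I₂ → x ∉ J₁ ∧ x ∉ X) ∧ (x ∈ J₁ → x ∉ X) := by
    intro x
    refine ⟨fun h => ⟨?_, ?_, ?_, ?_⟩, fun h => ⟨?_, ?_, ?_⟩, fun h => ⟨?_, ?_⟩, fun h => ?_⟩
    · intro hc; exact hExtnI _ (mem_negSet.1 hc) (by simpa using hASub h)
    · intro hc
      have h1 := Finset.mem_sdiff.1 h
      exact h1.2 (Finset.mem_inter.1 hc).2
    · intro hc; exact hJ₁I _ hc (hASub h)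
    · intro hc; exact (hXF _ hc).1 (hIF (hASub h))
    · intro hc; exact hExtnI _ (mem_negSet.1 h) (by simpa using hI₂Sub hc)
    · intro hc; exact hExtnJ _ (mem_negSet.1 h) (by simpa using hJ₁J hc)
    · intro hc; exact (hXF _ hc).1 (hnExtF h)
    · intro hc; exact hJ₁I _ hc (hI₂Sub h)
    · intro hc; exact (hXF _ hc).1 (hIF (hI₂Sub h))
    · intro hc; exact (hXF _ hc).1 (hJF (hJ₁J h))
  have hL2 : L.Nodup := by
    have hmemcl : ∀ (S : Finset ℤ), S.toList.Nodup := Finset.nodup_toList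
    have n45 : (lJ₁ ++ lX).Nodup := by
      rw [List.nodup_append']
      refine ⟨hmemcl J₁, hmemcl X, ?_⟩
      intro a ha hb
      exact ((hdisj a).2.2.2 (by simpa [lJ₁, Finset.mem_toList] using ha))
        (by simpa [lX, Finset.mem_toList] using hb)
    have n345 : (lI₂ ++ (lJ₁ ++ lX)).Nodup := by
      rw [List.nodup_append']
      refine ⟨hmemcl I₂, n45, ?_⟩
      intro a ha hb
      have haI₂ : a ∈ I₂ := by simpa [lI₂, Finset.mem_toList] using ha
      rcases List.mem_append.1 hb with hb | hb
      · exact ((hdisj a).2.2.1 haI₂).1 (by simpa [lJ₁, Finset.mem_toList] using hb)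
      · exact ((hdisj a).2.2.1 haI₂).2 (by simpa [lX, Finset.mem_toList] using hb)
    have n12 : (lA ++ lE).Nodup := by
      rw [List.nodup_append']
      refine ⟨hmemcl A, hmemcl _, ?_⟩
      intro a ha hb
      exact ((hdisj a).1 (by simpa [lA, Finset.mem_toList] using ha)).1
        (by simpa [lE, Finset.mem_toList] using hb)
    rw [hL, List.nodup_append']
    refine ⟨n12, n345, ?_⟩
    intro a ha hb
    have hb' : a ∈ I₂ ∨ a ∈ J₁ ∨ a ∈ X := by
      rcases List.mem_append.1 hb with hb | hb
      · exact Or.inl (by simpa [lI₂, Finset.mem_toList] using hb)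
      · rcases List.mem_append.1 hb with hb | hb
        · exact Or.inr (Or.inl (by simpa [lJ₁, Finset.mem_toList] using hb))
        · exact Or.inr (Or.inr (by simpa [lX, Finset.mem_toList] using hb))
    rcases List.mem_append.1 ha with ha | ha
    · have haA : a ∈ A := by simpa [lA, Finset.mem_toList] using ha
      rcases hb' with h | h | h
      · exact ((hdisj a).1 haA).2.1 h
      · exact ((hdisj a).1 haA).2.2.1 h
      · exact ((hdisj a).1 haA).2.2.2 h
    · have haE : a ∈ negSet Ext := by simpa [lE, Finset.mem_toList] using ha
      rcases hb' with h | h | h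
      · exact ((hdisj a).2.1 haE).1 h
      · exact ((hdisj a).2.1 haE).2.1 h
      · exact ((hdisj a).2.1 haE).2.2 h
  have hL4 : ∀ x ∈ SympE n, x ∈ L ∨ -x ∈ L := by
    intro x hx
    by_cases h1 : x ∈ L
    · exact Or.inl h1
    by_cases h2 : -x ∈ L
    · exact Or.inr h2
    exfalso
    have hxs := mem_SympE.1 hx
    -- if y ∈ F then y ∈ L-set or -y ∈ L-set
    have hFL : ∀ y, y ∈ F → (y ∈ L ∨ -y ∈ L) := by
      intro y hyF
      simp only [hF, Finset.mem_union] at hyF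
      rcases hyF with ((hy1 | hy1) | hy1) | hy1
      · left
        rw [hmemL]
        have hy2 : y ∈ A ∪ I₂ := by rw [hAI₂]; exact hy1
        rcases Finset.mem_union.1 hy2 with h | h
        · exact Or.inl h
        · exact Or.inr (Or.inr (Or.inl h))
      · by_cases hyI : y ∈ I
        · left; rw [hmemL]
          have : y ∈ A ∪ I₂ := by rw [hAI₂]; exact hyI
          rcases Finset.mem_union.1 this with h | h
          · exact Or.inl h
          · exact Or.inr (Or.inr (Or.inl h))
        · by_cases hyN : -y ∈ I
          · right; rw [hmemL]
            have : -y ∈ A ∪ I₂ := by rw [hAI₂]; exact hyN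
            rcases Finset.mem_union.1 this with h | h
            · exact Or.inl h
            · exact Or.inr (Or.inr (Or.inl h))
          · left; rw [hmemL]
            refine Or.inr (Or.inr (Or.inr (Or.inl ?_)))
            rw [hJ₁]
            refine Finset.mem_sdiff.2 ⟨Finset.mem_sdiff.2 ⟨hy1, hyI⟩, ?_⟩
            intro hc
            exact hyN (by simpa using mem_negSet.1 hc)
      · right; rw [hmemL]
        exact Or.inr (Or.inl (mem_negSet.2 (by simpa using hy1)))
      · left; rw [hmemL]; exact Or.inr (Or.inl hy1)
    have hxF : x ∉ F := fun hc => (hFL x hc).elim h1 h2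
    have hnxF : -x ∉ F := fun hc => by
      rcases hFL _ hc with h | h
      · exact h2 h
      · exact h1 (by simpa using h)
    have hax : |x| ∈ X := by
      simp only [hX, Finset.mem_filter, Finset.mem_Icc]
      rcases abs_cases x with ⟨he, _⟩ | ⟨he, _⟩
      · exact ⟨by omega, by rw [he]; exact hxF, by rw [he]; exact hnxF⟩
      · exact ⟨by omega, by rw [he]; exact hnxF, by rw [he]; simpa using hxF⟩
    rcases abs_cases x with ⟨he, _⟩ | ⟨he, _⟩
    · exact h1 ((hmemL x).2 (Or.inr (Or.inr (Or.inr (Or.inr (he ▸ hax))))))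
    · exact h2 ((hmemL (-x)).2 (Or.inr (Or.inr (Or.inr (Or.inr (he ▸ hax))))))
  -- the permutation
  set w := transPerm hL1 hL2 hL3 hL4 with hw
  have horder := orderList_transPerm hL1 hL2 hL3 hL4
  set M : List ℤ := (L.map (fun x => -x)).reverse with hM
  -- decompose the mirror
  set rnX := (lX.map (fun x : ℤ => -x)).reverse
  set rnJ₁ := (lJ₁.map (fun x : ℤ => -x)).reverse
  set rnI₂ := (lI₂.map (fun x : ℤ => -x)).reverse
  set rnE := (lE.map (fun x : ℤ => -x)).reverse
  set rnA := (lA.map (fun x : ℤ => -x)).reverse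
  have hMdec : M = rnX ++ (rnJ₁ ++ (rnI₂ ++ (rnE ++ rnA))) := by
    simp only [hM, hL, List.map_append, List.reverse_append, List.append_assoc]
    rfl
  -- a helper to convert the greedy condition into independence
  have hconv : ∀ (z : ℤ) (C : Finset ℤ), z ∈ SympE n → C ⊆ SympE n →
      (∃ B' ∈ ℬ, insert z C ⊆ B') → insert z C ∈ indepSets n ℬ := by
    intro z C hz hC hex
    refine mem_indepSets.2 ⟨?_, hex⟩
    intro u hu
    rcases Finset.mem_insert.1 hu with rfl | hu
    · exact hz
    · exact hC hu
  -- greedy computation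
  have hgp : greedyPicks n ℬ w = lA ++ (lI₂ ++ greedyAux ℬ (rnE ++ rnA) I) := by
    rw [greedyPicks, horder, hMdec]
    have hassoc : L ++ (rnX ++ (rnJ₁ ++ (rnI₂ ++ (rnE ++ rnA)))) =
        lA ++ (lE ++ (lI₂ ++ (lJ₁ ++ (lX ++ (rnX ++ (rnJ₁ ++ (rnI₂ ++ (rnE ++ rnA)))))))) := by
      simp only [hL, List.append_assoc]
    rw [hassoc]
    -- step 1: pick A
    rw [greedyAux_append_pick ℬ lA _ ∅ ⟨BI, hBIm, by
      intro z hz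
      rcases Finset.mem_union.1 hz with hz | hz
      · simp at hz
      · exact hIBI (hASub (by simpa [lA, Finset.mem_toList] using hz))⟩]
    congr 1
    have e1 : (∅ : Finset ℤ) ∪ lA.toFinset = A := by simp [lA]
    rw [e1]
    -- step 2: skip negSet Ext
    have hskip2 : ∀ z ∈ lE, ¬ ∃ B' ∈ ℬ, insert z A ⊆ B' := by
      intro z hz hex
      have hzE : z ∈ negSet Ext := by simpa [lE, Finset.mem_toList] using hz
      have hx := mem_negSet.1 hzE
      obtain ⟨hx1, hx2⟩ := (mem_Ext (-z)).1 hx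
      have hzS : z ∈ SympE n := by simpa using neg_mem_SympE (hExtS hx)
      have hAS : A ⊆ SympE n := fun u hu => hIS (hASub hu)
      have hind : insert z A ∈ indepSets n ℬ := hconv z A hzS hAS hex
      have hWz := hW (-z) hx1 hx2
      rw [neg_neg] at hWz
      exact hWz hind
    rw [greedyAux_append_skip ℬ lE _ A hskip2]
    -- step 3: pick I₂
    rw [greedyAux_append_pick ℬ lI₂ _ A ⟨BI, hBIm, by
      intro z hz
      rcases Finset.mem_union.1 hz with hz | hz
      · exact hIBI (hASub hz)
      · exact hIBI (hI₂Sub (by simpa [lI₂, Finset.mem_toList] using hz))⟩]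
    congr 1
    have e2 : A ∪ lI₂.toFinset = I := by
      rw [show lI₂.toFinset = I₂ by simp [lI₂]]
      exact hAI₂
    rw [e2]
    -- step 4: skip J₁
    have hskip4 : ∀ z ∈ lJ₁, ¬ ∃ B' ∈ ℬ, insert z I ⊆ B' := by
      intro z hz hex
      have hzJ : z ∈ J₁ := by simpa [lJ₁, Finset.mem_toList] using hz
      have hind : insert z I ∈ indepSets n ℬ := hconv z I (hJS (hJ₁J hzJ)) hIS hex
      exact hy z (Finset.mem_sdiff.2 ⟨hJ₁J hzJ, hJ₁I _ hzJ⟩) hind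
    rw [greedyAux_append_skip ℬ lJ₁ _ I hskip4]
    -- step 5: skip X
    have hskip5 : ∀ z ∈ lX, ¬ ∃ B' ∈ ℬ, insert z I ⊆ B' := by
      intro z hz hex
      have hzX : z ∈ X := by simpa [lX, Finset.mem_toList] using hz
      have hzI : z ∉ I := fun hc => (hXF _ hzX).1 (hIF hc)
      have hind : insert z I ∈ indepSets n ℬ := hconv z I (hXS hzX) hIS hex
      exact (hXF _ hzX).1 (hExtF ((mem_Ext z).2 ⟨hzI, hind⟩))
    rw [greedyAux_append_skip ℬ lX _ I hskip5]
    -- step 6: skip -X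
    have hskip6 : ∀ z ∈ rnX, ¬ ∃ B' ∈ ℬ, insert z I ⊆ B' := by
      intro z hz hex
      have hzX : -z ∈ X := by simpa [rnX, lX, Finset.mem_toList] using mem_mirror.1 hz
      have hzI : z ∉ I := fun hc => (hXF _ hzX).2 (by rw [neg_neg]; exact hIF hc)
      have hzS : z ∈ SympE n := by simpa using neg_mem_SympE (hXS hzX)
      have hind : insert z I ∈ indepSets n ℬ := hconv z I hzS hIS hex
      exact (hXF _ hzX).2 (by rw [neg_neg]; exact hExtF ((mem_Ext z).2 ⟨hzI, hind⟩))
    rw [greedyAux_append_skip ℬ rnX _ I hskip6]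
    -- step 7: skip -J₁
    have hskip7 : ∀ z ∈ rnJ₁, ¬ ∃ B' ∈ ℬ, insert z I ⊆ B' := by
      intro z hz hex
      have hzJ : -z ∈ J₁ := by simpa [rnJ₁, lJ₁, Finset.mem_toList] using mem_mirror.1 hz
      have hzI : z ∉ I := by
        intro hc
        exact hJ₁nI _ hzJ (by rwa [neg_neg])
      have hzS : z ∈ SympE n := by simpa using neg_mem_SympE (hJS (hJ₁J hzJ))
      have hind : insert z I ∈ indepSets n ℬ := hconv z I hzS hIS hex
      exact hExtnJ z ((mem_Ext z).2 ⟨hzI, hind⟩) (hJ₁J hzJ)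
    rw [greedyAux_append_skip ℬ rnJ₁ _ I hskip7]
    -- step 8: skip -I₂
    have hskip8 : ∀ z ∈ rnI₂, ¬ ∃ B' ∈ ℬ, insert z I ⊆ B' := by
      intro z hz hex
      obtain ⟨B', hB'm, hsub⟩ := hex
      have hzI₂ : -z ∈ I₂ := by simpa [rnI₂, lI₂, Finset.mem_toList] using mem_mirror.1 hz
      have h1 : z ∈ B' := hsub (Finset.mem_insert_self _ _)
      have h2 : -z ∈ B' := hsub (Finset.mem_insert_of_mem (hI₂Sub hzI₂))
      exact (hB.2.1 B' hB'm).2 z h1 h2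
    rw [greedyAux_append_skip ℬ rnI₂ _ I hskip8]
  -- the greedy solution
  set tp := greedyAux ℬ (rnE ++ rnA) I with htp
  have hsol : greedySol n ℬ w = I ∪ tp.toFinset := by
    rw [greedySol, hgp]
    simp only [List.toFinset_append]
    rw [show lA.toFinset = A by simp [lA], show lI₂.toFinset = I₂ by simp [lI₂]]
    rw [← Finset.union_assoc, hAI₂]
  -- tail picks lie in Ext ∪ negSet A
  have htpin : ∀ z ∈ tp, z ∈ Ext ∪ negSet A := by
    intro z hz
    have hzl : z ∈ rnE ++ rnA := greedyAux_subset ℬ _ _ _ hz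
    rcases List.mem_append.1 hzl with h | h
    · have : -z ∈ negSet Ext := by simpa [rnE, lE, Finset.mem_toList] using mem_mirror.1 h
      exact Finset.mem_union_left _ (by simpa using mem_negSet.1 this)
    · have : -z ∈ A := by simpa [rnA, lA, Finset.mem_toList] using mem_mirror.1 h
      exact Finset.mem_union_right _ (mem_negSet.2 this)
  -- threshold
  have hlenAE : (lA ++ lE).length = A.card + Ext.card := by
    have : (negSet Ext).card = Ext.card :=
      Finset.card_image_of_injective _ neg_injective
    simp [lA, lE, this]
  set k : ℕ := A.card + Ext.card with hk
  have hkn : k ≤ n := by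
    have h1 : (lA ++ lE).length ≤ L.length := by
      rw [hL]
      simp only [List.length_append]
      omega
    rw [hlenAE] at h1
    rw [trans_length hL1 hL2 hL3 hL4] at h1
    exact h1
  set t : ℤ := -(n:ℤ) + k with ht
  have htake : L.take k = lA ++ lE := by
    rw [hL, ← hlenAE, List.take_left]
  have hbot : ∀ x ∈ SympE n, (t ≤ w x ↔ x ∉ negSet A ∧ x ∉ Ext) := by
    intro x hx
    rw [hw, ht, transPerm_bot_iff hL1 hL2 hL3 hL4 hkn hx, htake]
    simp only [List.mem_append, lA, lE, Finset.mem_toList]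
    constructor
    · intro h
      push_neg at h
      constructor
      · intro hc; exact h.1 (mem_negSet.1 hc)
      · intro hc; exact h.2 (mem_negSet.2 (by simpa using hc))
    · rintro ⟨h1, h2⟩ (hc | hc)
      · exact h1 (mem_negSet.2 hc)
      · exact h2 (by simpa using mem_negSet.1 hc)
  have hcount : ∀ S : Finset ℤ, S ⊆ SympE n →
      (S.filter (fun b => t ≤ w b)) = S \ (negSet A ∪ Ext) := by
    intro S hS
    ext z
    simp only [Finset.mem_filter, Finset.mem_sdiff, Finset.mem_union]
    constructor
    · rintro ⟨hz, hz2⟩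
      have hb2 := (hbot z (hS hz)).1 hz2
      refine ⟨hz, fun hc => ?_⟩
      have hc' : z ∈ negSet A ∨ z ∈ Ext := by simpa [Finset.mem_union] using hc
      exact hc'.elim hb2.1 hb2.2
    · rintro ⟨hz, hz2⟩
      refine ⟨hz, (hbot z (hS hz)).2 ⟨?_, ?_⟩⟩
      · exact fun hc => hz2 (Or.inl hc)
      · exact fun hc => hz2 (Or.inr hc)
  have hSgS : (I ∪ tp.toFinset : Finset ℤ) ⊆ SympE n := by
    intro z hz
    rcases Finset.mem_union.1 hz with h | h
    · exact hIS h
    · have h'' : z ∈ Ext ∨ z ∈ negSet A := by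
        simpa [Finset.mem_union] using htpin z (List.mem_toFinset.1 h)
      rcases h'' with h' | h'
      · exact hExtS h'
      · have := hIS (hASub (mem_negSet.1 h'))
        simpa using neg_mem_SympE this
  have hgcount : ((I ∪ tp.toFinset) \ (negSet A ∪ Ext)) = I := by
    ext z
    simp only [Finset.mem_sdiff, Finset.mem_union, List.mem_toFinset]
    constructor
    · rintro ⟨hz1 | hz1, hz2⟩
      · exact hz1
      · have h'' : z ∈ Ext ∨ z ∈ negSet A := by
          simpa [Finset.mem_union] using htpin z hz1
        rcases h'' with h | h
        · exact absurd (Or.inr h) hz2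
        · exact absurd (Or.inl h) hz2
    · intro hz
      refine ⟨Or.inl hz, fun hcu => ?_⟩
      have hc' : z ∈ negSet A ∨ z ∈ Ext := by simpa [Finset.mem_union] using hcu
      rcases hc' with hc | hc
      · exact hIadm _ (hASub (mem_negSet.1 hc)) (by simpa using hz)
      · exact hExtI z hc hz
  have hBJS : BJ ⊆ SympE n := (hB.2.1 BJ hBJm).1
  have hJsub : J ⊆ BJ \ (negSet A ∪ Ext) := by
    intro z hz
    refine Finset.mem_sdiff.2 ⟨hJBJ hz, fun hcu => ?_⟩
    have hc' : z ∈ negSet A ∨ z ∈ Ext := by simpa [Finset.mem_union] using hcu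
    rcases hc' with hc | hc
    · have hzA : -z ∈ A := mem_negSet.1 hc
      exact (Finset.mem_sdiff.1 hzA).2 (mem_negSet.2 (by simpa using hz))
    · exact hExtJ z hc hz
  -- optimality
  have hopt := hB.2.2.2 w (transPerm_admissible hL1 hL2 hL3 hL4) (thrW w t)
    (thrW_compatible n w t) BJ hBJm
  rw [hsol] at hopt
  rw [sum_thrW, sum_thrW, hcount BJ hBJS, hcount _ hSgS, hgcount] at hopt
  have h1 : (J.card : ℝ) ≤ ((BJ \ (negSet A ∪ Ext)).card : ℝ) := by
    exact_mod_cast Nat.cast_le.2 (Finset.card_le_card hJsub)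
  have h3 : (J.card : ℝ) ≤ (I.card : ℝ) := le_trans h1 hopt
  have h4 : J.card ≤ I.card := by exact_mod_cast h3
  omega
/-! ### Chain construction and the final theorem -/

lemma chain_to {n : ℕ} {ℬ : Finset (Finset ℤ)} (hB : IsSymplecticMatroid n ℬ)
    {J : Finset ℤ} (hJ : J ∈ indepSets n ℬ) :
    ∀ (d : ℕ) (C : Finset ℤ), C ∈ indepSets n ℬ → IsAdmissibleSet (C ∪ J) →
      J.card ≤ C.card + d →
      ∃ K ∈ indepSets n ℬ, C ⊆ K ∧ K ⊆ C ∪ J ∧ J.card ≤ K.card := by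
  intro d
  induction d with
  | zero =>
    intro C hC hadm hle
    exact ⟨C, hC, subset_rfl, Finset.subset_union_left, by omega⟩
  | succ d ih =>
    intro C hC hadm hle
    by_cases h : J.card ≤ C.card
    · exact ⟨C, hC, subset_rfl, Finset.subset_union_left, h⟩
    · have hcd : C.card < J.card := by omega
      obtain ⟨y, hyJC, hyInd⟩ := augmentation hB hC hJ hcd hadm
      have hyJ : y ∈ J := (Finset.mem_sdiff.1 hyJC).1
      have hyC : y ∉ C := (Finset.mem_sdiff.1 hyJC).2
      have hunion : insert y C ∪ J = C ∪ J := by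
        ext z
        simp only [Finset.mem_union, Finset.mem_insert]
        constructor
        · rintro ((rfl | h1) | h1)
          · exact Or.inr hyJ
          · exact Or.inl h1
          · exact Or.inr h1
        · rintro (h1 | h1)
          · exact Or.inl (Or.inr h1)
          · exact Or.inr h1
      have hcard' : (insert y C).card = C.card + 1 := Finset.card_insert_of_notMem hyC
      obtain ⟨K, hK, hCK, hKsub, hJK⟩ := ih (insert y C) hyInd (by rwa [hunion]) (by omega)
      refine ⟨K, hK, ?_, ?_, hJK⟩
      · exact (Finset.subset_insert _ _).trans hCK
      · rwa [hunion] at hKsub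

lemma main_ind {n : ℕ} {ℬ : Finset (Finset ℤ)} (hB : IsSymplecticMatroid n ℬ) :
    ∀ (k : ℕ) (I J : Finset ℤ), I ∈ indepSets n ℬ → J ∈ indepSets n ℬ →
      I.card < J.card → (∀ y ∈ J \ I, insert y I ∉ indepSets n ℬ) →
      (I ∩ negSet J).card ≤ k →
      ∃ x, x ∉ I ∧ insert x I ∈ indepSets n ℬ ∧ insert (-x) (I \ negSet J) ∈ indepSets n ℬ := by
  intro k
  induction k with
  | zero =>
    intro I J hI hJ hcard hy hk
    -- the generic step; the strict-decrease case will be impossible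
    have hIadm : IsAdmissibleSet I := indep_admissible hB hI
    have hA : I \ negSet J ∈ indepSets n ℬ := indep_subset hI Finset.sdiff_subset
    have hadmAJ : IsAdmissibleSet ((I \ negSet J) ∪ J) := by
      intro z hz hnz
      have hz' : z ∈ I \ negSet J ∨ z ∈ J := by simpa [Finset.mem_union] using hz
      have hnz' : -z ∈ I \ negSet J ∨ -z ∈ J := by simpa [Finset.mem_union] using hnz
      rcases hz' with h1 | h1 <;> rcases hnz' with h2 | h2
      · exact hIadm z (Finset.mem_sdiff.1 h1).1 (Finset.mem_sdiff.1 h2).1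
      · exact (Finset.mem_sdiff.1 h1).2 (mem_negSet.2 h2)
      · exact (Finset.mem_sdiff.1 h2).2 (mem_negSet.2 (by simpa using h1))
      · exact indep_admissible hB hJ z h1 h2
    obtain ⟨K, hK, hAK, hKsub, hJK⟩ := chain_to hB hJ J.card (I \ negSet J) hA hadmAJ (by omega)
    have hcardIK : I.card < K.card := lt_of_lt_of_le hcard hJK
    have hyK : ∀ y ∈ K \ I, insert y I ∉ indepSets n ℬ := by
      intro y hyKI
      have hy1 : y ∈ K := (Finset.mem_sdiff.1 hyKI).1
      have hy2 : y ∉ I := (Finset.mem_sdiff.1 hyKI).2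
      have : y ∈ (I \ negSet J) ∪ J := hKsub hy1
      have hyJ : y ∈ J := by
        rcases Finset.mem_union.1 this with h | h
        · exact absurd (Finset.mem_sdiff.1 h).1 hy2
        · exact h
      exact hy y (Finset.mem_sdiff.2 ⟨hyJ, hy2⟩)
    have hsubI₂ : I ∩ negSet K ⊆ I ∩ negSet J := by
      intro z hz
      have hz1 : z ∈ I := (Finset.mem_inter.1 hz).1
      have hz2 : -z ∈ K := mem_negSet.1 (Finset.mem_inter.1 hz).2
      have : -z ∈ (I \ negSet J) ∪ J := hKsub hz2
      rcases Finset.mem_union.1 this with h | h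
      · exact absurd hz1 (by simpa using hIadm (-z) (Finset.mem_sdiff.1 h).1)
      · exact Finset.mem_inter.2 ⟨hz1, mem_negSet.2 h⟩
    have heq : I ∩ negSet K = I ∩ negSet J := by
      apply Finset.eq_of_subset_of_card_le hsubI₂
      omega
    have hAeq : I \ negSet K = I \ negSet J := by
      ext z
      simp only [Finset.mem_sdiff]
      constructor
      · rintro ⟨h1, h2⟩
        refine ⟨h1, fun hc => h2 ?_⟩
        have : z ∈ I ∩ negSet J := Finset.mem_inter.2 ⟨h1, hc⟩
        rw [← heq] at this
        exact (Finset.mem_inter.1 this).2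
      · rintro ⟨h1, h2⟩
        refine ⟨h1, fun hc => h2 ?_⟩
        have : z ∈ I ∩ negSet K := Finset.mem_inter.2 ⟨h1, hc⟩
        rw [heq] at this
        exact (Finset.mem_inter.1 this).2
    have hAJK : I \ negSet K ⊆ K := by rw [hAeq]; exact hAK
    obtain ⟨x, hx1, hx2, hx3⟩ := main_run hB hI hK hcardIK hyK hAJK
    rw [hAeq] at hx3
    exact ⟨x, hx1, hx2, hx3⟩
  | succ k ih =>
    intro I J hI hJ hcard hy hk
    have hIadm : IsAdmissibleSet I := indep_admissible hB hI
    have hA : I \ negSet J ∈ indepSets n ℬ := indep_subset hI Finset.sdiff_subset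
    have hadmAJ : IsAdmissibleSet ((I \ negSet J) ∪ J) := by
      intro z hz hnz
      have hz' : z ∈ I \ negSet J ∨ z ∈ J := by simpa [Finset.mem_union] using hz
      have hnz' : -z ∈ I \ negSet J ∨ -z ∈ J := by simpa [Finset.mem_union] using hnz
      rcases hz' with h1 | h1 <;> rcases hnz' with h2 | h2
      · exact hIadm z (Finset.mem_sdiff.1 h1).1 (Finset.mem_sdiff.1 h2).1
      · exact (Finset.mem_sdiff.1 h1).2 (mem_negSet.2 h2)
      · exact (Finset.mem_sdiff.1 h2).2 (mem_negSet.2 (by simpa using h1))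
      · exact indep_admissible hB hJ z h1 h2
    obtain ⟨K, hK, hAK, hKsub, hJK⟩ := chain_to hB hJ J.card (I \ negSet J) hA hadmAJ (by omega)
    have hcardIK : I.card < K.card := lt_of_lt_of_le hcard hJK
    have hyK : ∀ y ∈ K \ I, insert y I ∉ indepSets n ℬ := by
      intro y hyKI
      have hy1 : y ∈ K := (Finset.mem_sdiff.1 hyKI).1
      have hy2 : y ∉ I := (Finset.mem_sdiff.1 hyKI).2
      have : y ∈ (I \ negSet J) ∪ J := hKsub hy1
      have hyJ : y ∈ J := by
        rcases Finset.mem_union.1 this with h | h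
        · exact absurd (Finset.mem_sdiff.1 h).1 hy2
        · exact h
      exact hy y (Finset.mem_sdiff.2 ⟨hyJ, hy2⟩)
    have hsubI₂ : I ∩ negSet K ⊆ I ∩ negSet J := by
      intro z hz
      have hz1 : z ∈ I := (Finset.mem_inter.1 hz).1
      have hz2 : -z ∈ K := mem_negSet.1 (Finset.mem_inter.1 hz).2
      have : -z ∈ (I \ negSet J) ∪ J := hKsub hz2
      rcases Finset.mem_union.1 this with h | h
      · exact absurd hz1 (by simpa using hIadm (-z) (Finset.mem_sdiff.1 h).1)
      · exact Finset.mem_inter.2 ⟨hz1, mem_negSet.2 h⟩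
    by_cases heq : I ∩ negSet K = I ∩ negSet J
    · have hAeq : I \ negSet K = I \ negSet J := by
        ext z
        simp only [Finset.mem_sdiff]
        constructor
        · rintro ⟨h1, h2⟩
          refine ⟨h1, fun hc => h2 ?_⟩
          have : z ∈ I ∩ negSet J := Finset.mem_inter.2 ⟨h1, hc⟩
          rw [← heq] at this
          exact (Finset.mem_inter.1 this).2
        · rintro ⟨h1, h2⟩
          refine ⟨h1, fun hc => h2 ?_⟩
          have : z ∈ I ∩ negSet K := Finset.mem_inter.2 ⟨h1, hc⟩
          rw [heq] at this
          exact (Finset.mem_inter.1 this).2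
      have hAJK : I \ negSet K ⊆ K := by rw [hAeq]; exact hAK
      obtain ⟨x, hx1, hx2, hx3⟩ := main_run hB hI hK hcardIK hyK hAJK
      rw [hAeq] at hx3
      exact ⟨x, hx1, hx2, hx3⟩
    · have hlt : (I ∩ negSet K).card < (I ∩ negSet J).card :=
        Finset.card_lt_card (ssubset_of_subset_of_ne hsubI₂ heq)
      obtain ⟨x, hx1, hx2, hx3⟩ := ih I K hI hK hcardIK hyK (by omega)
      have hsd : I \ negSet J ⊆ I \ negSet K := by
        intro z hz
        obtain ⟨h1, h2⟩ := Finset.mem_sdiff.1 hz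
        refine Finset.mem_sdiff.2 ⟨h1, fun hc => h2 ?_⟩
        have : z ∈ I ∩ negSet K := Finset.mem_inter.2 ⟨h1, hc⟩
        exact (Finset.mem_inter.1 (hsubI₂ this)).2
      refine ⟨x, hx1, hx2, indep_subset hx3 ?_⟩
      intro z hz
      rcases Finset.mem_insert.1 hz with rfl | hz
      · exact Finset.mem_insert_self _ _
      · exact Finset.mem_insert_of_mem (hsd hz)

/-- **Necessity.** If `ℐ` is the family of independent sets of a symplectic
matroid `(E_{±n}, ℬ)`, and `I, J ∈ ℐ` with `|I| < |J|` and `{y} ∪ I ∉ ℐ` for all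
`y ∈ J \ I`, then `I ∪ J` is inadmissible and there exists `x ∉ I` such that both
`{x} ∪ I` and `{-x} ∪ (I \ (-J))` are in `ℐ`. -/
theorem symplectic_matroid_indep_necessity (n : ℕ) (hn : 0 < n)
    (ℬ : Finset (Finset ℤ)) (hB : IsSymplecticMatroid n ℬ)
    (I J : Finset ℤ)
    (hI : I ∈ indepSets n ℬ) (hJ : J ∈ indepSets n ℬ)
    (hcard : I.card < J.card)
    (hy : ∀ y ∈ J \ I, insert y I ∉ indepSets n ℬ) :
    ¬ IsAdmissibleSet (I ∪ J) ∧
      ∃ x, x ∉ I ∧ insert x I ∈ indepSets n ℬ ∧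
        insert (-x) (I \ negSet J) ∈ indepSets n ℬ := by
  constructor
  · intro hadm
    obtain ⟨y, hy1, hy2⟩ := augmentation hB hI hJ hcard hadm
    exact hy y hy1 hy2
  · exact main_ind hB (I ∩ negSet J).card I J hI hJ hcard hy le_rfl
end

section
/- Let ℐ be a nonempty subset-closed family of admissible subsets of E_{±n} with the property that whenever I, J ∈ ℐ satisfy |I| < |J| and for all y ∈ J∖I the set {y} ∪ I is not in ℐ, then I ∪ J is inadmissible and there exists x ∉ I such that both {x} ∪ I and {−x} ∪ (I ∖ (−J)) are in ℐ. Then all maximal members of ℐ with respect to inclusion have the same number of elements. -/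
/-- If a nonempty subset-closed family `ℐ` of admissible subsets of `E_{±n}`
satisfies the exchange property, then all maximal members of `ℐ` (with respect
to inclusion) have the same number of elements. -/
theorem maximal_members_equicardinal (n : ℕ) (hn : 0 < n) (ℐ : Finset (Finset ℤ))
    (hne : ℐ.Nonempty)
    (hclosed : ∀ I ∈ ℐ, ∀ I' ⊆ I, I' ∈ ℐ)
    (hadm : ∀ I ∈ ℐ, I ⊆ SympE n ∧ IsAdmissibleSet I)
    (hex : ExchangeProp ℐ) :
    ∀ B ∈ maximalMembers ℐ, ∀ B' ∈ maximalMembers ℐ, B.card = B'.card := by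
  have key : ∀ B ∈ maximalMembers ℐ, ∀ J ∈ ℐ, ¬ B.card < J.card := by
    intro B hB J hJ hlt
    rw [maximalMembers, Finset.mem_filter] at hB
    obtain ⟨hBI, hmax⟩ := hB
    have hcond : ∀ y ∈ J \ B, insert y B ∉ ℐ := by
      intro y hy hins
      rw [Finset.mem_sdiff] at hy
      have := hmax _ hins (Finset.subset_insert _ _)
      exact hy.2 (this ▸ Finset.mem_insert_self y B)
    obtain ⟨-, x, hx, hins, -⟩ := hex B hBI J hJ hlt hcond
    have := hmax _ hins (Finset.subset_insert _ _)
    exact hx (this ▸ Finset.mem_insert_self x B)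
  intro B hB B' hB'
  have h1 := key B hB B' (Finset.mem_of_mem_filter B' hB')
  have h2 := key B' hB' B (Finset.mem_of_mem_filter B hB)
  omega
end

section
/- Let ℐ be a nonempty subset-closed family of admissible subsets of E_{±n} with the property that whenever I, J ∈ ℐ satisfy |I| < |J| and for all y ∈ J∖I the set {y} ∪ I is not in ℐ, then I ∪ J is inadmissible and there exists x ∉ I such that both {x} ∪ I and {−x} ∪ (I ∖ (−J)) are in ℐ. Let ℬ be the collection of maximal members of ℐ, let ≺ be an admissible total ordering of E_{±n}, let B be the member of ℬ chosen by the greedy algorithm with respect to ≺, and let B′ be any other member of ℬ. Then for every i with 1 ≤ i ≤ |B′|, the i-th largest element of B with respect to ≺ is no smaller than the i-th largest element of B′ with respect to ≺. -/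
/-- The `w`-values of the elements of `S`, listed from largest to smallest.
Since the admissible ordering induced by `w` compares `x ≺ y ↔ w x < w y`, the
`i`-th entry of this list is the `w`-value of the `i`-th largest element of `S`
with respect to that ordering. -/
def descValues (w : Equiv.Perm ℤ) (S : Finset ℤ) : List ℤ :=
  ((S.image w).sort (· ≤ ·)).reverse

-- ==== auxiliary lemmas ====
namespace GreedyAuxProof

lemma symp_neg_mem {n : ℕ} {x : ℤ} (hx : x ∈ SympE n) : -x ∈ SympE n := by
  simp only [SympE, Finset.mem_erase, Finset.mem_Icc] at *
  omega

lemma symp_ne_zero {n : ℕ} {x : ℤ} (hx : x ∈ SympE n) : x ≠ 0 := by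
  simp only [SympE, Finset.mem_erase] at hx
  exact hx.1

lemma image_symp {n : ℕ} {w : Equiv.Perm ℤ} (hw : IsAdmissiblePerm n w) :
    (SympE n).image w = SympE n := by
  apply Finset.eq_of_subset_of_card_le
  · intro y hy
    obtain ⟨x, hx, rfl⟩ := Finset.mem_image.mp hy
    exact hw.1 x hx
  · rw [Finset.card_image_of_injective _ w.injective]

lemma perm_mem_iff {n : ℕ} {w : Equiv.Perm ℤ} (hw : IsAdmissiblePerm n w) {x : ℤ} :
    w x ∈ SympE n ↔ x ∈ SympE n := by
  constructor
  · intro h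
    rw [← image_symp hw] at h
    obtain ⟨y, hy, hxy⟩ := Finset.mem_image.mp h
    rwa [← w.injective hxy]
  · exact hw.1 x

lemma mem_orderList {n : ℕ} {w : Equiv.Perm ℤ} (hw : IsAdmissiblePerm n w) {x : ℤ} :
    x ∈ orderList n w ↔ x ∈ SympE n := by
  unfold orderList
  simp only [List.mem_map, List.mem_reverse, Finset.mem_sort]
  constructor
  · rintro ⟨y, hy, rfl⟩
    rw [← perm_mem_iff hw]
    simpa using hy
  · intro hx
    exact ⟨w x, (perm_mem_iff hw).mpr hx, w.symm_apply_apply x⟩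

lemma orderList_pairwise (n : ℕ) (w : Equiv.Perm ℤ) :
    (orderList n w).Pairwise (fun a b => w b < w a) := by
  unfold orderList
  rw [List.pairwise_map]
  have h1 : ((SympE n).sort (· ≤ ·)).Pairwise (fun a b => a < b) :=
    (Finset.sortedLT_sort _).pairwise
  have h2 : (((SympE n).sort (· ≤ ·)).reverse).Pairwise (fun a b => b < a) :=
    List.pairwise_reverse.mpr h1
  refine h2.imp ?_
  intro a b h
  simpa using h

/-- "feasible extension" predicate. -/
def Ok (ℬ : Finset (Finset ℤ)) (C : Finset ℤ) : Prop := ∃ M ∈ ℬ, C ⊆ M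

lemma greedyAux_sublist (ℬ : Finset (Finset ℤ)) :
    ∀ (l : List ℤ) (C : Finset ℤ), List.Sublist (greedyAux ℬ l C) l
  | [], C => by simp [greedyAux]
  | a :: l, C => by
    rw [greedyAux]
    split_ifs with h
    · exact (greedyAux_sublist ℬ l (insert a C)).cons₂ a
    · exact (greedyAux_sublist ℬ l C).cons a

lemma greedyAux_main (ℬ : Finset (Finset ℤ)) (w : Equiv.Perm ℤ) :
    ∀ (l : List ℤ) (C : Finset ℤ),
      l.Pairwise (fun a b => w b < w a) →
      (∀ a ∈ l, ∀ c ∈ C, w a < w c) →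
      Ok ℬ C →
      Ok ℬ (C ∪ (greedyAux ℬ l C).toFinset) ∧
      ∀ z ∈ l, z ∉ C ∪ (greedyAux ℬ l C).toFinset →
        ¬ Ok ℬ (insert z ((C ∪ (greedyAux ℬ l C).toFinset).filter (fun c => w z < w c)))
  | [], C => by
    intro _ _ hC
    simpa [greedyAux] using hC
  | a :: l, C => by
    intro hl hlC hC
    have hla : ∀ b ∈ l, w b < w a := (List.pairwise_cons.mp hl).1
    have hl' : l.Pairwise (fun a b => w b < w a) := (List.pairwise_cons.mp hl).2
    rw [greedyAux]
    split_ifs with h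
    · -- accept a
      have hlC' : ∀ a' ∈ l, ∀ c ∈ insert a C, w a' < w c := by
        intro a' ha' c hc
        rcases Finset.mem_insert.mp hc with rfl | hc
        · exact hla a' ha'
        · exact hlC a' (List.mem_cons_of_mem _ ha') c hc
      obtain ⟨ok1, rej⟩ := greedyAux_main ℬ w l (insert a C) hl' hlC' h
      have hSeq : C ∪ (a :: greedyAux ℬ l (insert a C)).toFinset
          = insert a C ∪ (greedyAux ℬ l (insert a C)).toFinset := by
        simp only [List.toFinset_cons]
        rw [Finset.union_insert, Finset.insert_union]
      rw [hSeq]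
      refine ⟨ok1, ?_⟩
      intro z hz hznot
      rcases List.mem_cons.mp hz with rfl | hz'
      · exact absurd (Finset.mem_union_left _ (Finset.mem_insert_self _ _)) hznot
      · exact rej z hz' hznot
    · -- reject a
      have hlC' : ∀ a' ∈ l, ∀ c ∈ C, w a' < w c := fun a' ha' c hc =>
        hlC a' (List.mem_cons_of_mem _ ha') c hc
      obtain ⟨ok1, rej⟩ := greedyAux_main ℬ w l C hl' hlC' hC
      refine ⟨ok1, ?_⟩
      intro z hz hznot
      rcases List.mem_cons.mp hz with rfl | hz'
      · have hfeq : (C ∪ (greedyAux ℬ l C).toFinset).filter (fun c => w z < w c) = C := by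
          ext c
          simp only [Finset.mem_filter, Finset.mem_union, List.mem_toFinset]
          constructor
          · rintro ⟨hc | hc, hwc⟩
            · exact hc
            · have : c ∈ l := (greedyAux_sublist ℬ l C).mem hc
              exact absurd (hla c this) (lt_asymm hwc)
          · intro hc
            exact ⟨Or.inl hc, hlC z List.mem_cons_self c hc⟩
        rw [hfeq]
        exact h
      · exact rej z hz' hznot

section Family

variable {n : ℕ} {ℐ : Finset (Finset ℤ)} {w : Equiv.Perm ℤ}

lemma exists_max_superset {C : Finset ℤ} (hC : C ∈ ℐ) :
    ∃ M ∈ maximalMembers ℐ, C ⊆ M := by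
  classical
  obtain ⟨M, hM, hmax⟩ := (ℐ.filter (fun I => C ⊆ I)).exists_max_image Finset.card
    ⟨C, Finset.mem_filter.mpr ⟨hC, Finset.Subset.refl C⟩⟩
  rw [Finset.mem_filter] at hM
  refine ⟨M, Finset.mem_filter.mpr ⟨hM.1, ?_⟩, hM.2⟩
  intro I hI hMI
  have hIf : I ∈ ℐ.filter (fun I => C ⊆ I) :=
    Finset.mem_filter.mpr ⟨hI, hM.2.trans hMI⟩
  exact (Finset.eq_of_subset_of_card_le hMI (hmax I hIf)).symm

lemma ok_iff (hclosed : ∀ I ∈ ℐ, ∀ I' ⊆ I, I' ∈ ℐ) {C : Finset ℤ} :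
    Ok (maximalMembers ℐ) C ↔ C ∈ ℐ := by
  constructor
  · rintro ⟨M, hM, hCM⟩
    exact hclosed M (Finset.mem_filter.mp hM).1 C hCM
  · intro h
    exact exists_max_superset h

-- main greedy solution properties
lemma sol_props (hne : ℐ.Nonempty)
    (hclosed : ∀ I ∈ ℐ, ∀ I' ⊆ I, I' ∈ ℐ)
    (hadm : ∀ I ∈ ℐ, I ⊆ SympE n ∧ IsAdmissibleSet I)
    (hw : IsAdmissiblePerm n w) :
    (greedyPicks n (maximalMembers ℐ) w).Pairwise (fun a b => w b < w a) ∧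
    (greedyPicks n (maximalMembers ℐ) w).toFinset ∈ maximalMembers ℐ ∧
    (∀ z ∈ SympE n, z ∉ (greedyPicks n (maximalMembers ℐ) w).toFinset →
      insert z ((greedyPicks n (maximalMembers ℐ) w).toFinset.filter
        (fun c => w z < w c)) ∉ ℐ) := by
  classical
  set ℬ := maximalMembers ℐ with hℬdef
  set p := greedyPicks n ℬ w with hpdef
  have hok0 : Ok ℬ (∅ : Finset ℤ) := by
    obtain ⟨C, hC⟩ := hne
    obtain ⟨M, hM, _⟩ := exists_max_superset hC
    exact ⟨M, hM, Finset.empty_subset _⟩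
  obtain ⟨hok, hrej⟩ := greedyAux_main ℬ w (orderList n w) ∅
    (orderList_pairwise n w) (by simp) hok0
  rw [Finset.empty_union] at hok hrej
  have hpair : p.Pairwise (fun a b => w b < w a) :=
    List.Pairwise.sublist (greedyAux_sublist ℬ (orderList n w) ∅) (orderList_pairwise n w)
  have hrej' : ∀ z ∈ SympE n, z ∉ p.toFinset →
      insert z (p.toFinset.filter (fun c => w z < w c)) ∉ ℐ := by
    intro z hz hzp hmem
    exact hrej z ((mem_orderList hw).mpr hz) hzp ((ok_iff hclosed).mpr hmem)
  have hBI : p.toFinset ∈ ℐ := (ok_iff hclosed).mp hok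
  refine ⟨hpair, ?_, hrej'⟩
  rw [hℬdef, maximalMembers, Finset.mem_filter]
  refine ⟨hBI, ?_⟩
  intro I hI hBsub
  by_contra hne'
  have hss : p.toFinset ⊂ I := Finset.ssubset_iff_subset_ne.mpr ⟨hBsub, Ne.symm hne'⟩
  obtain ⟨z, hzI, hzB⟩ := Finset.exists_of_ssubset hss
  have hzS : z ∈ SympE n := (hadm I hI).1 hzI
  have hsub : insert z (p.toFinset.filter (fun c => w z < w c)) ⊆ I := by
    intro c hc
    rcases Finset.mem_insert.mp hc with rfl | hc
    · exact hzI
    · exact hBsub (Finset.mem_filter.mp hc).1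
  exact hrej' z hzS hzB (hclosed I hI _ hsub)

lemma maximal_card_eq (hex : ExchangeProp ℐ) {M M' : Finset ℤ}
    (hM : M ∈ maximalMembers ℐ) (hM' : M' ∈ maximalMembers ℐ) :
    M.card = M'.card := by
  have key : ∀ {A B : Finset ℤ}, A ∈ maximalMembers ℐ → B ∈ maximalMembers ℐ →
      ¬ A.card < B.card := by
    intro A B hA hB hlt
    rw [maximalMembers, Finset.mem_filter] at hA hB
    have hyA : ∀ y ∈ B \ A, insert y A ∉ ℐ := by
      intro y hy hins
      have := hA.2 _ hins (Finset.subset_insert _ _)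
      have hyA' : y ∈ A := this ▸ Finset.mem_insert_self y A
      exact (Finset.mem_sdiff.mp hy).2 hyA'
    obtain ⟨-, x, hx, hins, -⟩ := hex A hA.1 B hB.1 hlt hyA
    have := hA.2 _ hins (Finset.subset_insert _ _)
    exact hx (this ▸ Finset.mem_insert_self x A)
  exact le_antisymm (not_lt.mp (key hM' hM)) (not_lt.mp (key hM hM'))

lemma descValues_eq_map {p : List ℤ} (hp : p.Pairwise (fun a b => w b < w a)) :
    descValues w p.toFinset = p.map w := by
  classical
  have hnd : p.Nodup := hp.imp (fun h => by rintro rfl; exact lt_irrefl _ h)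
  have hmnd : (p.map w).Nodup := hnd.map w.injective
  have hpair : (p.map w).Pairwise (fun u v => v < u) := List.pairwise_map.mpr hp
  have hsorted : ((p.map w).reverse).Pairwise (· ≤ ·) := by
    rw [List.pairwise_reverse]
    exact hpair.imp le_of_lt
  have himg : p.toFinset.image w = (p.map w).toFinset := by
    ext x; simp
  have hperm : List.Perm ((p.toFinset.image w).sort (· ≤ ·)) ((p.map w).reverse) := by
    rw [himg]
    exact ((Finset.sort_perm_toList _ _).trans
      ((List.toFinset_toList hmnd).trans (List.reverse_perm _).symm))
  have heq : ((p.toFinset.image w).sort (· ≤ ·)) = (p.map w).reverse :=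
    hperm.eq_of_pairwise' (Finset.pairwise_sort _ _) hsorted
  rw [descValues, heq, List.reverse_reverse]

end Family
end GreedyAuxProof

open GreedyAuxProof

/-- Let `ℐ` be a nonempty subset-closed family of admissible subsets of
`E_{±n}` with the exchange property, let `ℬ` be the collection of maximal
members of `ℐ`, let `B` be the member of `ℬ` chosen by the greedy algorithm with
respect to an admissible ordering, and let `B'` be any other member of `ℬ`.
Then for every `1 ≤ i ≤ |B'|`, the `i`-th largest element of `B` is no smaller
than the `i`-th largest element of `B'` with respect to the ordering. -/
theorem greedy_dominates_pointwise (n : ℕ) (hn : 0 < n) (ℐ : Finset (Finset ℤ))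
    (hne : ℐ.Nonempty)
    (hclosed : ∀ I ∈ ℐ, ∀ I' ⊆ I, I' ∈ ℐ)
    (hadm : ∀ I ∈ ℐ, I ⊆ SympE n ∧ IsAdmissibleSet I)
    (hex : ExchangeProp ℐ)
    (w : Equiv.Perm ℤ) (hw : IsAdmissiblePerm n w)
    (B B' : Finset ℤ)
    (hB : B = greedySol n (maximalMembers ℐ) w)
    (hB' : B' ∈ maximalMembers ℐ)
    (i : ℕ) (h1 : 1 ≤ i) (h2 : i ≤ B'.card) :
    ∃ a b : ℤ, (descValues w B)[i - 1]? = some a ∧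
      (descValues w B')[i - 1]? = some b ∧ b ≤ a := by
  classical
  obtain ⟨hpair, hBmax, hrej⟩ := sol_props (n := n) (w := w) hne hclosed hadm hw
  have hBp : B = (greedyPicks n (maximalMembers ℐ) w).toFinset := hB
  set p := greedyPicks n (maximalMembers ℐ) w with hpdef
  rw [← hBp] at hBmax hrej
  have hnd : p.Nodup := hpair.imp (fun h => by rintro rfl; exact lt_irrefl _ h)
  have hBmem : B ∈ ℐ := by
    rw [maximalMembers, Finset.mem_filter] at hBmax
    exact hBmax.1
  have hB'mem : B' ∈ ℐ := by
    rw [maximalMembers, Finset.mem_filter] at hB'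
    exact hB'.1
  have hBsymp : B ⊆ SympE n := (hadm B hBmem).1
  have hB'symp : B' ⊆ SympE n := (hadm B' hB'mem).1
  have hcards : B.card = B'.card := maximal_card_eq hex hBmax hB'
  have hdB : descValues w B = p.map w := by
    rw [hBp]; exact descValues_eq_map hpair
  have hlenp : p.length = B.card := by
    rw [hBp]; exact (List.toFinset_card_of_nodup hnd).symm
  have hlenB' : (descValues w B').length = B'.card := by
    rw [descValues, List.length_reverse, Finset.length_sort,
      Finset.card_image_of_injective _ w.injective]
  have hip : i - 1 < p.length := by omega
  have hi1 : i - 1 < (descValues w B).length := by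
    rw [hdB, List.length_map]; exact hip
  have hi2 : i - 1 < (descValues w B').length := by rw [hlenB']; omega
  refine ⟨(descValues w B)[i-1]'hi1, (descValues w B')[i-1]'hi2,
    List.getElem?_eq_getElem hi1, List.getElem?_eq_getElem hi2, ?_⟩
  set a : ℤ := (descValues w B)[i-1]'hi1 with hadef
  set b : ℤ := (descValues w B')[i-1]'hi2 with hbdef
  by_contra hab
  push_neg at hab
  -- `hab : a < b`
  have ha : a = w (p[i-1]'hip) := by
    rw [hadef]
    rw [List.getElem_of_eq hdB]
    exact List.getElem_map _
  -- sortedness facts about `descValues w B'`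
  have hdB'sorted : (descValues w B').Pairwise (fun u v => v ≤ u) := by
    rw [descValues]
    exact List.pairwise_reverse.mpr (Finset.pairwise_sort _ _)
  have hdB'mem : ∀ v ∈ descValues w B', v ∈ B'.image w := by
    intro v hv
    rw [descValues, List.mem_reverse, Finset.mem_sort] at hv
    exact hv
  have hdB'nd : (descValues w B').Nodup := by
    rw [descValues]
    exact List.nodup_reverse.mpr (Finset.sort_nodup _ _)
  -- the sets I and J
  set J : Finset ℤ := B'.filter (fun y => b ≤ w y) with hJdef
  set I : Finset ℤ := B.filter (fun z => a < w z) with hIdef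
  have hJB' : J ⊆ B' := Finset.filter_subset _ _
  have hIB : I ⊆ B := Finset.filter_subset _ _
  have hJmem : J ∈ ℐ := hclosed B' hB'mem J hJB'
  have hImem : I ∈ ℐ := hclosed B hBmem I hIB
  -- card J ≥ i
  have htknd : ((descValues w B').take i).Nodup :=
    hdB'nd.sublist (List.take_sublist _ _)
  have hsub2 : ((descValues w B').take i).toFinset ⊆ J.image w := by
    intro v hv
    rw [List.mem_toFinset, List.mem_take_iff_getElem] at hv
    obtain ⟨k, hk, hvk⟩ := hv
    have hk2 : k < (descValues w B').length := lt_of_lt_of_le hk (min_le_right _ _)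
    have hbv : b ≤ v := by
      have hki : k ≤ i - 1 := by
        have : k < i := lt_of_lt_of_le hk (min_le_left _ _)
        omega
      rcases eq_or_lt_of_le hki with heq | hlt
      · subst heq
        exact le_of_eq (by rw [hbdef, ← hvk])
      · have h3 := List.pairwise_iff_getElem.mp hdB'sorted k (i-1) hk2 hi2 hlt
        have h4 : (descValues w B')[k]'hk2 = v := hvk
        calc b = (descValues w B')[i-1]'hi2 := hbdef
          _ ≤ (descValues w B')[k]'hk2 := h3
          _ = v := h4
    have hvim : v ∈ B'.image w := hdB'mem v (hvk ▸ List.getElem_mem hk2)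
    obtain ⟨y, hy, rfl⟩ := Finset.mem_image.mp hvim
    exact Finset.mem_image.mpr ⟨y, Finset.mem_filter.mpr ⟨hy, hbv⟩, rfl⟩
  have hJcard : i ≤ J.card := by
    have e1 : ((descValues w B').take i).length = i := by
      rw [List.length_take]; omega
    calc i = ((descValues w B').take i).toFinset.card := by
              rw [List.toFinset_card_of_nodup htknd, e1]
      _ ≤ (J.image w).card := Finset.card_le_card hsub2
      _ = J.card := Finset.card_image_of_injective _ w.injective
  -- card I ≤ i - 1
  have hsubI : I ⊆ (p.take (i-1)).toFinset := by
    intro z hz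
    obtain ⟨hzB, hza⟩ := Finset.mem_filter.mp hz
    rw [hBp, List.mem_toFinset] at hzB
    obtain ⟨k, hk, hzk⟩ := List.mem_iff_getElem.mp hzB
    have hki : k < i - 1 := by
      by_contra hge
      push_neg at hge
      rcases eq_or_lt_of_le hge with heq | hlt
      · subst heq
        have h3 : w (p[i-1]'hip) = w z := by rw [← hzk]
        omega
      · have h3 := List.pairwise_iff_getElem.mp hpair (i-1) k hip hk hlt
        have h4 : w (p[k]'hk) = w z := by rw [hzk]
        omega
    rw [List.mem_toFinset, List.mem_take_iff_getElem]
    exact ⟨k, lt_min hki hk, hzk⟩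
  have hIcard : I.card ≤ i - 1 := by
    calc I.card ≤ (p.take (i-1)).toFinset.card := Finset.card_le_card hsubI
      _ ≤ (p.take (i-1)).length := List.toFinset_card_le _
      _ ≤ i - 1 := by rw [List.length_take]; omega
  have hltIJ : I.card < J.card := by omega
  -- rejection step
  have hstep : ∀ y, y ∈ SympE n → y ∉ B → a < w y → insert y I ∉ ℐ := by
    intro y hyS hyB hay hins
    have hsub : B.filter (fun c => w y < w c) ⊆ I := by
      intro c hc
      obtain ⟨hcB, hcw⟩ := Finset.mem_filter.mp hc
      exact Finset.mem_filter.mpr ⟨hcB, lt_trans hay hcw⟩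
    have hss : insert y (B.filter fun c => w y < w c) ⊆ insert y I :=
      Finset.insert_subset_insert _ hsub
    exact hrej y hyS hyB (hclosed _ hins _ hss)
  have hyJ : ∀ y ∈ J \ I, insert y I ∉ ℐ := by
    intro y hy
    obtain ⟨hyJ', hynI⟩ := Finset.mem_sdiff.mp hy
    obtain ⟨hyB', hby⟩ := Finset.mem_filter.mp hyJ'
    have hay : a < w y := lt_of_lt_of_le hab hby
    have hyB : y ∉ B := fun h => hynI (Finset.mem_filter.mpr ⟨h, hay⟩)
    exact hstep y (hB'symp hyB') hyB hay
  obtain ⟨hnadm, x, hxnI, hx1, hx2⟩ := hex I hImem J hJmem hltIJ hyJ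
  have hxS : x ∈ SympE n := (hadm _ hx1).1 (Finset.mem_insert_self _ _)
  have hwx0 : w x ≠ 0 := symp_ne_zero ((perm_mem_iff hw).mpr hxS)
  have hxa : w x ≤ a := by
    by_contra h'
    push_neg at h'
    have hxB : x ∉ B := fun hmem => hxnI (Finset.mem_filter.mpr ⟨hmem, h'⟩)
    exact hstep x hxS hxB h' hx1
  have hnxa : -(w x) ≤ a := by
    by_contra h'
    push_neg at h'
    have hwnx : w (-x) = -(w x) := hw.2 x
    have hnxB : -x ∉ B := by
      intro hmem
      have hnxI : -x ∈ I := Finset.mem_filter.mpr ⟨hmem, by rw [hwnx]; exact h'⟩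
      exact (hadm _ hx1).2 x (Finset.mem_insert_self _ _) (Finset.mem_insert_of_mem hnxI)
    have hsub : B.filter (fun c => w (-x) < w c) ⊆ I \ negSet J := by
      intro c hc
      obtain ⟨hcB, hcw⟩ := Finset.mem_filter.mp hc
      rw [hwnx] at hcw
      refine Finset.mem_sdiff.mpr ⟨Finset.mem_filter.mpr ⟨hcB, lt_trans h' hcw⟩, ?_⟩
      intro hcneg
      obtain ⟨j, hj, hjc⟩ := Finset.mem_image.mp hcneg
      obtain ⟨hjB', hbj⟩ := Finset.mem_filter.mp hj
      have hwc : w c = -(w j) := by rw [← hjc, hw.2 j]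
      omega
    have hss : insert (-x) (B.filter fun c => w (-x) < w c) ⊆ insert (-x) (I \ negSet J) :=
      Finset.insert_subset_insert _ hsub
    exact hrej (-x) (symp_neg_mem hxS) hnxB (hclosed _ hx2 _ hss)
  have ha0 : 0 < a := by omega
  -- derive the contradiction from inadmissibility of I ∪ J
  rw [IsAdmissibleSet] at hnadm
  push_neg at hnadm
  obtain ⟨t, htU, hntU⟩ := hnadm
  rcases Finset.mem_union.mp htU with htI | htJ <;>
    rcases Finset.mem_union.mp hntU with hntI | hntJ
  · exact (hadm B hBmem).2 t (hIB htI) (hIB hntI)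
  · have h1' : a < w t := (Finset.mem_filter.mp htI).2
    have h2' : b ≤ w (-t) := (Finset.mem_filter.mp hntJ).2
    rw [hw.2 t] at h2'
    omega
  · have h1' : b ≤ w t := (Finset.mem_filter.mp htJ).2
    have h2' : a < w (-t) := (Finset.mem_filter.mp hntI).2
    rw [hw.2 t] at h2'
    omega
  · exact (hadm B' hB'mem).2 t (hJB' htJ) (hJB' hntJ)
end
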